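/- arXiv:2403.00149 — 10 statements merged into one kernel-verified Lean document; each statement's English description precedes it below -/
import Mathlib

section
/- Let P(x) = a₋₁x⁻¹ + a₀ + a₁x be an integer Laurent trinomial, define a_n = ct[P(x)^n], and let p be prime. Then for all n, a_n ≡ ∏ᵢ a_{dᵢ} (mod p), where d₀, d₁, … are the base-p digits of n. -/
open LaurentPolynomial

/-- The constant term of an integer Laurent polynomial. -/
noncomputable def ct (Q : LaurentPolynomial ℤ) : ℤ := Q.coeff 0

/-- The Laurent trinomial `a₋₁ x⁻¹ + a₀ + a₁ x`. -/
noncomputable def Ptri (am1 a0 a1 : ℤ) : LaurentPolynomial ℤ :=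
  C am1 * T (-1) + C a0 + C a1 * T 1

namespace StmtAux

variable (p : ℕ)

/-- `T` as a monoid hom from `Multiplicative ℤ`. -/
noncomputable def Tmul (R : Type*) [CommSemiring R] : Multiplicative ℤ →* LaurentPolynomial R where
  toFun a := T (Multiplicative.toAdd a)
  map_one' := T_zero
  map_mul' a b := T_add _ _

/-- Reduction of coefficients mod `p`, as a ring hom. -/
noncomputable def phi : LaurentPolynomial ℤ →+* LaurentPolynomial (ZMod p) :=
  AddMonoidAlgebra.liftNCRingHom
    ((C : ZMod p →+* LaurentPolynomial (ZMod p)).comp (Int.castRingHom (ZMod p)))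
    (Tmul (ZMod p)) (fun _ _ => Commute.all _ _)

lemma phi_single (a : ℤ) (b : ℤ) :
    phi p (AddMonoidAlgebra.single a b) = AddMonoidAlgebra.single a ((b : ZMod p)) := by
  show AddMonoidAlgebra.liftNC _ _ (AddMonoidAlgebra.single a b) = _
  rw [AddMonoidAlgebra.liftNC_single]
  simp [Tmul, single_eq_C_mul_T]

lemma phi_apply (Q : LaurentPolynomial ℤ) (a : ℤ) :
    (phi p Q).coeff a = ((Q.coeff a : ℤ) : ZMod p) := by
  induction Q using AddMonoidAlgebra.induction_linear with
  | zero => simp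
  | add f g hf hg =>
    rw [map_add, AddMonoidAlgebra.coeff_add, AddMonoidAlgebra.coeff_add, Finsupp.add_apply,
      Finsupp.add_apply, hf, hg]; push_cast; ring
  | single a' b =>
    rw [phi_single, AddMonoidAlgebra.coeff_single, AddMonoidAlgebra.coeff_single,
      Finsupp.single_apply, Finsupp.single_apply]
    split <;> simp

/-- Substitution `x ↦ x^p`, as a ring hom. -/
noncomputable def psi : LaurentPolynomial (ZMod p) →+* LaurentPolynomial (ZMod p) :=
  AddMonoidAlgebra.mapDomainRingHom (ZMod p) (AddMonoidHom.mulRight (p : ℤ))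

lemma psi_single (a : ℤ) (b : ZMod p) :
    psi p (AddMonoidAlgebra.single a b) = AddMonoidAlgebra.single (a * p) b :=
  AddMonoidAlgebra.mapDomain_single

lemma psi_apply_zero (hp : p ≠ 0) (Q : LaurentPolynomial (ZMod p)) : (psi p Q).coeff 0 = Q.coeff 0 := by
  have hinj : Function.Injective (fun x : ℤ => x * (p : ℤ)) := by
    intro a b h
    exact mul_right_cancel₀ (by exact_mod_cast hp) h
  have : (psi p Q).coeff ((0 : ℤ) * p) = Q.coeff 0 := Finsupp.mapDomain_apply hinj Q.coeff 0
  simpa using this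

lemma psi_support_dvd (Q : LaurentPolynomial (ZMod p)) {a : ℤ} (ha : a ∈ (psi p Q).coeff.support) :
    (p : ℤ) ∣ a := by
  classical
  have := Finsupp.mapDomain_support (f := fun x : ℤ => x * (p : ℤ)) (s := Q.coeff)
  have ha' := this ha
  simp only [Finset.mem_image] at ha'
  obtain ⟨k, _, hk⟩ := ha'
  exact ⟨k, by rw [← hk]; ring⟩

lemma charP : CharP (LaurentPolynomial (ZMod p)) p := by
  have hinj : Function.Injective (C : ZMod p →+* LaurentPolynomial (ZMod p)) := by
    intro a b h
    rw [← single_eq_C, ← single_eq_C] at h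
    exact Finsupp.single_injective 0 (congrArg AddMonoidAlgebra.coeff h)
  exact charP_of_injective_ringHom hinj p

variable {p}

/-- The key support-separation lemma. -/
lemma mul_apply_zero (A B : LaurentPolynomial (ZMod p))
    (h : ∀ a ∈ A.coeff.support, ∀ b ∈ B.coeff.support, a + b = 0 → a = 0) :
    (A * B).coeff 0 = A.coeff 0 * B.coeff 0 := by
  classical
  rw [AddMonoidAlgebra.coeff_mul]
  rw [Finsupp.sum]
  have h1 : ∀ a₁ ∈ A.coeff.support, a₁ ≠ 0 →
      (B.coeff.sum fun a₂ b₂ => if a₁ + a₂ = 0 then A.coeff a₁ * b₂ else 0) = 0 := by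
    intro a₁ ha₁ hne
    rw [Finsupp.sum]
    apply Finset.sum_eq_zero
    intro a₂ ha₂
    by_cases hc : a₁ + a₂ = 0
    · exact absurd (h a₁ ha₁ a₂ ha₂ hc) hne
    · simp [hc]
  have h2 : (B.coeff.sum fun a₂ b₂ => if (0 : ℤ) + a₂ = 0 then A.coeff 0 * b₂ else 0)
      = A.coeff 0 * B.coeff 0 := by
    rw [Finsupp.sum]
    simp only [zero_add]
    rw [Finset.sum_ite_eq' B.coeff.support 0 (fun a₂ => A.coeff 0 * B.coeff a₂)]
    split
    · rfl
    · next h0 => simp [Finsupp.notMem_support_iff.mp h0]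
  by_cases h0 : (0 : ℤ) ∈ A.coeff.support
  · rw [Finset.sum_eq_single_of_mem 0 h0 h1]
    exact h2
  · rw [Finset.sum_eq_zero]
    · simp [Finsupp.notMem_support_iff.mp h0]
    · intro a₁ ha₁
      exact h1 a₁ ha₁ (fun he => h0 (he ▸ ha₁))

variable (am1 a0 a1 : ℤ)

lemma Ptri_eq : Ptri am1 a0 a1 =
    (AddMonoidAlgebra.single (-1) am1 + AddMonoidAlgebra.single 0 a0
      + AddMonoidAlgebra.single 1 a1 : LaurentPolynomial ℤ) := by
  rw [Ptri, single_eq_C_mul_T, single_eq_C_mul_T, single_eq_C_mul_T]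
  rw [T_zero, mul_one]

lemma phi_Ptri : phi p (Ptri am1 a0 a1) =
    (AddMonoidAlgebra.single (-1) ((am1 : ZMod p)) + AddMonoidAlgebra.single 0 ((a0 : ZMod p))
      + AddMonoidAlgebra.single 1 ((a1 : ZMod p)) : LaurentPolynomial (ZMod p)) := by
  rw [Ptri_eq, map_add, map_add, phi_single, phi_single, phi_single]

lemma support_phi_Ptri_pow (d : ℕ) :
    ∀ a ∈ ((phi p (Ptri am1 a0 a1)) ^ d).coeff.support, |a| ≤ (d : ℤ) := by
  classical
  induction d with
  | zero =>
    intro a ha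
    rw [pow_zero] at ha
    rw [AddMonoidAlgebra.one_def, AddMonoidAlgebra.coeff_single] at ha
    have h2 := Finsupp.support_single_subset ha
    simp only [Finset.mem_singleton] at h2
    simp [h2]
  | succ d ih =>
    intro a ha
    rw [pow_succ] at ha
    have hsub := AddMonoidAlgebra.support_coeff_mul_subset ((phi p (Ptri am1 a0 a1)) ^ d)
      (phi p (Ptri am1 a0 a1)) ha
    rw [Finset.mem_add] at hsub
    obtain ⟨b, hb, c, hc, rfl⟩ := hsub
    have hb' := ih b hb
    have hc' : |c| ≤ 1 := by
      have : (phi p (Ptri am1 a0 a1)).coeff c ≠ 0 := Finsupp.mem_support_iff.mp hc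
      by_contra hcon
      apply this
      rw [phi_Ptri, AddMonoidAlgebra.coeff_add, AddMonoidAlgebra.coeff_add, Finsupp.add_apply,
        Finsupp.add_apply, AddMonoidAlgebra.coeff_single, AddMonoidAlgebra.coeff_single,
        AddMonoidAlgebra.coeff_single, Finsupp.single_apply,
        Finsupp.single_apply, Finsupp.single_apply]
      have h1 : ¬ ((-1 : ℤ) = c) := by rintro rfl; exact hcon (by norm_num)
      have h2 : ¬ ((0 : ℤ) = c) := by rintro rfl; exact hcon (by norm_num)
      have h3 : ¬ ((1 : ℤ) = c) := by rintro rfl; exact hcon (by norm_num)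
      rw [if_neg h1, if_neg h2, if_neg h3]; ring
    push_cast
    calc |b + c| ≤ |b| + |c| := abs_add_le _ _
      _ ≤ d + 1 := by omega

lemma frobenius_step (hp : p.Prime) :
    (phi p (Ptri am1 a0 a1)) ^ p = psi p (phi p (Ptri am1 a0 a1)) := by
  haveI : Fact p.Prime := ⟨hp⟩
  haveI := charP p
  rw [phi_Ptri]
  rw [add_pow_char, add_pow_char]
  rw [AddMonoidAlgebra.single_pow, AddMonoidAlgebra.single_pow, AddMonoidAlgebra.single_pow]
  rw [map_add, map_add, psi_single, psi_single, psi_single]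
  simp [ZMod.pow_card, smul_eq_mul, mul_comm]

end StmtAux

open StmtAux in
theorem stmt_3 (am1 a0 a1 : ℤ) (p : ℕ) (hp : p.Prime) (n : ℕ) :
    ct ((Ptri am1 a0 a1) ^ n) ≡
      ((Nat.digits p n).map (fun d => ct ((Ptri am1 a0 a1) ^ d))).prod [ZMOD (p : ℤ)] := by
  haveI : Fact p.Prime := ⟨hp⟩
  have hA : ∀ m : ℕ, ((ct ((Ptri am1 a0 a1) ^ m) : ℤ) : ZMod p)
      = ((phi p (Ptri am1 a0 a1)) ^ m).coeff 0 := by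
    intro m
    rw [← map_pow, phi_apply]
    rfl
  have key : ∀ n : ℕ, ((ct ((Ptri am1 a0 a1) ^ n) : ℤ) : ZMod p)
      = ((((Nat.digits p n).map (fun d => ct ((Ptri am1 a0 a1) ^ d))).prod : ℤ) : ZMod p) := by
    intro n
    induction n using Nat.strong_induction_on with
    | _ n ih =>
      rcases Nat.eq_zero_or_pos n with rfl | hn
      · have h1 : ct ((Ptri am1 a0 a1) ^ 0) = 1 := by
          rw [pow_zero, ct, AddMonoidAlgebra.one_def]
          exact Finsupp.single_eq_same
        rw [pow_zero] at h1
        simp [h1]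
      · rw [Nat.digits_def' hp.one_lt hn, List.map_cons, List.prod_cons, Int.cast_mul]
        rw [← ih (n / p) (Nat.div_lt_self hn hp.one_lt)]
        rw [hA, hA, hA]
        conv_lhs => rw [show n = n % p + p * (n / p) from (Nat.mod_add_div n p).symm]
        rw [pow_add, pow_mul, frobenius_step am1 a0 a1 hp, ← map_pow (psi p)]
        rw [mul_apply_zero, psi_apply_zero p hp.ne_zero]
        intro a ha b hb hab
        have h1 := support_phi_Ptri_pow am1 a0 a1 (n % p) a ha
        have h2 := psi_support_dvd p _ hb
        have h3 : (p : ℤ) ∣ a := by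
          have : a = -b := by omega
          rw [this]
          exact dvd_neg.mpr h2
        refine Int.eq_zero_of_abs_lt_dvd h3 (lt_of_le_of_lt h1 ?_)
        exact_mod_cast Nat.mod_lt n hp.pos
  exact (ZMod.intCast_eq_intCast_iff' _ _ _).mp (key n)
end

section
/- Let T_n = ct[(x⁻¹ + 1 + x)^n] be the central trinomial coefficients and M_n = ct[(x⁻¹ + 1 + x)^n (1 − x²)] the Motzkin numbers. Then 2·M_n = 3·T_n + 2·T_{n+1} − T_{n+2} for all n ≥ 0. -/
open LaurentPolynomial

private lemma mulT (Q : LaurentPolynomial ℤ) (k m : ℤ) :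
    (Q * T k : LaurentPolynomial ℤ).coeff m = Q.coeff (m - k) := by
  rw [show (T k : LaurentPolynomial ℤ) = AddMonoidAlgebra.single k 1 from rfl,
    AddMonoidAlgebra.coeff_mul_single_apply, mul_one, ← sub_eq_add_neg]

private lemma mulP (Q : LaurentPolynomial ℤ) (m : ℤ) :
    (Q * (T (-1) + 1 + T 1) : LaurentPolynomial ℤ).coeff m = Q.coeff (m + 1) + Q.coeff m + Q.coeff (m - 1) := by
  rw [mul_add, mul_add, mul_one, AddMonoidAlgebra.coeff_add, AddMonoidAlgebra.coeff_add, Finsupp.add_apply, Finsupp.add_apply, mulT, mulT,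
    sub_neg_eq_add]

private lemma symmP (n : ℕ) (m : ℤ) :
    ((T (-1) + 1 + T 1 : LaurentPolynomial ℤ) ^ n).coeff m
      = ((T (-1) + 1 + T 1 : LaurentPolynomial ℤ) ^ n).coeff (-m) := by
  have h : invert ((T (-1) + 1 + T 1 : LaurentPolynomial ℤ) ^ n)
      = (T (-1) + 1 + T 1 : LaurentPolynomial ℤ) ^ n := by
    rw [map_pow, map_add, map_add, map_one, invert_T, invert_T]
    ring_nf
  have h2 := invert_apply ((T (-1) + 1 + T 1 : LaurentPolynomial ℤ) ^ n) (-m)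
  rw [h, neg_neg] at h2
  exact h2.symm

theorem stmt_7 (n : ℕ) :
    2 * ct ((T (-1) + 1 + T 1) ^ n * (1 - T 2)) =
      3 * ct ((T (-1) + 1 + T 1) ^ n) + 2 * ct ((T (-1) + 1 + T 1) ^ (n + 1))
        - ct ((T (-1) + 1 + T 1) ^ (n + 2)) := by
  set P : LaurentPolynomial ℤ := T (-1) + 1 + T 1 with hP
  have h1 : P ^ (n + 1) = P ^ n * P := pow_succ P n
  have h2 : P ^ (n + 2) = P ^ (n + 1) * P := pow_succ P (n + 1)
  simp only [ct, h1, h2]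
  rw [mul_sub, mul_one, AddMonoidAlgebra.coeff_sub, Finsupp.sub_apply, mulT]
  rw [mulP, mulP, mulP, mulP, mulP]
  have hs := symmP n 2
  have hs1 := symmP n 1
  rw [← hP] at hs hs1
  norm_num
  omega
end

section
/- Define a_{n,i} = ct[(x⁻¹ + 1 + x)^n · x^i], i.e., the coefficient of x^{-i} (equivalently x^i) in (x⁻¹+1+x)^n. Then for all nonnegative integers n and i: a_{n+i,0} = a_{i,0}·a_{n,0} + 2·Σ_{j=1}^{i} a_{i,j}·a_{n,j}. -/
open LaurentPolynomial

/-- `a n i` is the coefficient of `x^{-i}` (equivalently `x^i`) in `(x⁻¹+1+x)^n`. -/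
noncomputable def a (n i : ℕ) : ℤ := ct ((T (-1) + 1 + T 1) ^ n * T (i : ℤ))

namespace Stmt8Aux

open Pointwise

noncomputable def P : LaurentPolynomial ℤ := T (-1) + 1 + T 1

lemma a_eq (n i : ℕ) : a n i = (P ^ n).coeff (-(i : ℤ)) := by
  have : (T (i : ℤ) : LaurentPolynomial ℤ) = AddMonoidAlgebra.single (i : ℤ) 1 := rfl
  rw [a, ct, P, this, AddMonoidAlgebra.coeff_mul_single_apply]
  simp

lemma invert_P : invert P = P := by
  rw [P]
  simp only [map_add, invert_T, map_one]
  ring_nf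

lemma sym (n : ℕ) (k : ℤ) : (P ^ n).coeff (-k) = (P ^ n).coeff k := by
  have h : invert (P ^ n) = P ^ n := by rw [map_pow, invert_P]
  calc (P ^ n).coeff (-k) = (invert (P ^ n)).coeff k := by rw [invert_apply]
    _ = (P ^ n).coeff k := by rw [h]

lemma supp_P : P.coeff.support ⊆ Finset.Icc (-1 : ℤ) 1 := by
  intro k hk
  rw [Finsupp.mem_support_iff] at hk
  by_contra hc
  apply hk
  simp only [Finset.mem_Icc, not_and_or, not_le] at hc
  have h1 : (P : LaurentPolynomial ℤ).coeff k
      = (T (-1) : LaurentPolynomial ℤ).coeff k + (1 : LaurentPolynomial ℤ).coeff k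
        + (T 1 : LaurentPolynomial ℤ).coeff k := by
    rw [P]; rfl
  have hone : (1 : LaurentPolynomial ℤ).coeff = Finsupp.single (0 : ℤ) 1 := rfl
  rw [h1, hone]
  rw [T_apply, T_apply, Finsupp.single_apply]
  rcases hc with hc | hc <;>
  · rw [if_neg (by omega), if_neg (by omega), if_neg (by omega)]; ring

lemma supp_pow (n : ℕ) : (P ^ n).coeff.support ⊆ Finset.Icc (-(n : ℤ)) n := by
  classical
  induction n with
  | zero =>
    simp only [pow_zero, Nat.cast_zero, neg_zero]
    have hone : (1 : LaurentPolynomial ℤ).coeff = Finsupp.single (0 : ℤ) 1 := rfl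
    rw [hone]
    intro k hk
    have := Finsupp.support_single_subset hk
    simp only [Finset.mem_singleton] at this
    simp [this]
  | succ m ih =>
    intro k hk
    have := AddMonoidAlgebra.support_coeff_mul_subset (P ^ m) P (by rw [← pow_succ]; exact hk)
    have h2 : (P ^ m).coeff.support + P.coeff.support ⊆
        Finset.Icc (-(m : ℤ)) m + Finset.Icc (-1 : ℤ) 1 :=
      Finset.add_subset_add ih supp_P
    have h3 := h2 this
    have h4 := Finset.Icc_add_Icc_subset (-(m : ℤ)) (m : ℤ) (-1 : ℤ) 1 h3
    simp only [Finset.mem_Icc] at h4 ⊢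
    push_cast
    omega

lemma conv (f g : LaurentPolynomial ℤ) (m : ℕ)
    (hf : f.coeff.support ⊆ Finset.Icc (-(m : ℤ)) m) :
    (f * g).coeff 0 = ∑ k ∈ Finset.Icc (-(m : ℤ)) m, f.coeff k * g.coeff (-k) := by
  classical
  rw [AddMonoidAlgebra.coeff_mul]
  have inner : ∀ a₁ b₁ : ℤ, (g.coeff.sum fun a₂ b₂ => if a₁ + a₂ = 0 then b₁ * b₂ else 0)
      = b₁ * g.coeff (-a₁) := by
    intro a₁ b₁
    rw [Finsupp.sum]
    have : ∀ a₂ ∈ g.coeff.support, (if a₁ + a₂ = 0 then b₁ * g.coeff a₂ else 0)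
        = (if a₂ = -a₁ then b₁ * g.coeff a₂ else 0) := by
      intro a₂ _
      congr 1
      simp only [eq_iff_iff]
      omega
    rw [Finset.sum_congr rfl this, Finset.sum_ite_eq' g.coeff.support (-a₁) (fun a₂ => b₁ * g.coeff a₂)]
    split_ifs with h
    · rfl
    · rw [Finsupp.notMem_support_iff.mp h, mul_zero]
  have houter : (f.coeff.sum fun a₁ b₁ => g.coeff.sum fun a₂ b₂ => if a₁ + a₂ = 0 then b₁ * b₂ else 0)
      = f.coeff.sum fun a₁ b₁ => b₁ * g.coeff (-a₁) := by
    apply Finsupp.sum_congr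
    intro a₁ _
    exact inner a₁ (f.coeff a₁)
  rw [houter]
  rw [Finsupp.sum_of_support_subset f.coeff hf (fun a b => b * g.coeff (-a)) (by intros; ring)]

lemma sum_symm (F : ℤ → ℤ) (hF : ∀ k, F (-k) = F k) (i : ℕ) :
    ∑ k ∈ Finset.Icc (-(i : ℤ)) i, F k
      = F 0 + 2 * ∑ j ∈ Finset.Icc 1 i, F (j : ℤ) := by
  induction i with
  | zero => simp
  | succ m ih =>
    have h1 : Finset.Icc (-((m : ℤ) + 1)) ((m : ℤ) + 1)
        = insert (-((m : ℤ) + 1)) (insert ((m : ℤ) + 1) (Finset.Icc (-(m : ℤ)) m)) := by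
      ext k
      simp only [Finset.mem_Icc, Finset.mem_insert]
      omega
    have h2 : (-((m : ℤ) + 1)) ∉ insert ((m : ℤ) + 1) (Finset.Icc (-(m : ℤ)) m) := by
      simp only [Finset.mem_insert, Finset.mem_Icc]
      omega
    have h3 : ((m : ℤ) + 1) ∉ Finset.Icc (-(m : ℤ)) (m : ℤ) := by
      simp only [Finset.mem_Icc]
      omega
    have hcast : (((m + 1 : ℕ)) : ℤ) = (m : ℤ) + 1 := by push_cast; ring
    rw [hcast, h1, Finset.sum_insert h2, Finset.sum_insert h3, ih,
      Finset.sum_Icc_succ_top (by omega : 1 ≤ m + 1)]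
    rw [hF ((m : ℤ) + 1), hcast]
    ring

end Stmt8Aux

theorem stmt_8 (n i : ℕ) :
    a (n + i) 0 = a i 0 * a n 0 + 2 * ∑ j ∈ Finset.Icc 1 i, a i j * a n j := by
  open Stmt8Aux in
  have key : a (n + i) 0 = ∑ k ∈ Finset.Icc (-(i : ℤ)) i, (P ^ i).coeff k * (P ^ n).coeff (-k) := by
    rw [a_eq]
    simp only [Nat.cast_zero, neg_zero]
    rw [show n + i = i + n from Nat.add_comm n i, pow_add]
    exact conv (P ^ i) (P ^ n) i (supp_pow i)
  have hFsym : ∀ k : ℤ, (P ^ i).coeff (-k) * (P ^ n).coeff (-(-k)) = (P ^ i).coeff k * (P ^ n).coeff (-k) := by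
    intro k
    rw [Stmt8Aux.sym i k, neg_neg, ← Stmt8Aux.sym n k]
  rw [key, Stmt8Aux.sum_symm (fun k => (P ^ i).coeff k * (P ^ n).coeff (-k)) hFsym i]
  congr 1
  · rw [a_eq, a_eq]
    simp
  · congr 1
    apply Finset.sum_congr rfl
    intro j _
    rw [a_eq, a_eq, Stmt8Aux.sym i (j : ℤ)]
end

section
/- Let T_n be the central trinomial coefficients, T_n = ct[(x⁻¹+1+x)^n]. If n is a nonnegative integer whose base-3 expansion contains the digit 2, then T_n ≡ 0 (mod 3). -/
open LaurentPolynomial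

namespace Stmt10Aux

abbrev R := ZMod 3

noncomputable def φ : LaurentPolynomial ℤ →+* LaurentPolynomial R :=
  AddMonoidAlgebra.liftNCRingHom ((C).comp (Int.castRingHom R))
    (AddMonoidAlgebra.of R ℤ) (fun _ _ => Commute.all _ _)

lemma phi_single (a : ℤ) (b : ℤ) :
    φ (AddMonoidAlgebra.single a b) = AddMonoidAlgebra.single a ((b : R)) := by
  show AddMonoidAlgebra.liftNC _ _ (AddMonoidAlgebra.single a b) = _
  rw [AddMonoidAlgebra.liftNC_single]
  show C ((b : ℤ) : R) * T a = _
  rw [← single_eq_C_mul_T]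

lemma phi_apply (P : LaurentPolynomial ℤ) (m : ℤ) : (φ P).coeff m = ((P.coeff m : ℤ) : R) := by
  induction P using AddMonoidAlgebra.induction_linear with
  | zero => simp
  | add f g hf hg =>
      rw [map_add]
      show (φ f + φ g).coeff m = _
      rw [AddMonoidAlgebra.coeff_add, Finsupp.add_apply, hf, hg]
      show _ = (((f + g : LaurentPolynomial ℤ).coeff m : ℤ) : R)
      rw [AddMonoidAlgebra.coeff_add, Finsupp.add_apply]
      push_cast
      ring
  | single a b =>
      rw [phi_single, AddMonoidAlgebra.coeff_single, AddMonoidAlgebra.coeff_single, Finsupp.single_apply, Finsupp.single_apply]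
      split <;> simp

noncomputable def f : LaurentPolynomial R := T (-1) + 1 + T 1

def trip : ℤ →+ ℤ := AddMonoidHom.mk' (fun n => 3 * n) (by intro a b; ring)

noncomputable def ψ : LaurentPolynomial R →+* LaurentPolynomial R :=
  AddMonoidAlgebra.mapDomainRingHom R trip

lemma psi_T (k : ℤ) : ψ (T k) = T (3 * k) := by
  show AddMonoidAlgebra.mapDomain _ (AddMonoidAlgebra.single k 1) = _
  rw [AddMonoidAlgebra.mapDomain_single]
  rfl

lemma psi_apply_zero (P : LaurentPolynomial R) : (ψ P).coeff 0 = P.coeff 0 := by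
  show Finsupp.mapDomain trip P.coeff 0 = P.coeff 0
  have : (0 : ℤ) = trip 0 := rfl
  conv_lhs => rw [this]
  exact Finsupp.mapDomain_apply (fun a b h => by
    simp only [trip, AddMonoidHom.mk'_apply] at h; omega) P.coeff 0

lemma psi_apply_ne (P : LaurentPolynomial R) (m : ℤ) (hm : ¬ (3 ∣ m)) : (ψ P).coeff m = 0 := by
  show Finsupp.mapDomain trip P.coeff m = 0
  apply Finsupp.mapDomain_notin_range
  rintro ⟨a, ha⟩
  simp only [trip, AddMonoidHom.mk'_apply] at ha
  exact hm ⟨a, ha.symm⟩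

lemma h3 : (3 : LaurentPolynomial R) = 0 := by
  rw [show (3 : LaurentPolynomial R) = C (3 : R) from (map_ofNat C 3).symm,
    show (3 : R) = 0 from rfl, map_zero]

lemma hab : (T (-1) : LaurentPolynomial R) * T 1 = 1 := by
  rw [← T_add]; norm_num

lemma f_sq : f ^ 2 = T (-2) + 2 * T (-1) + 2 * T 1 + T 2 := by
  have h2 : (T (-2) : LaurentPolynomial R) = T (-1) * T (-1) := by rw [← T_add]; norm_num
  have h2' : (T 2 : LaurentPolynomial R) = T 1 * T 1 := by rw [← T_add]; norm_num
  rw [f, h2, h2']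
  linear_combination 2 * hab + h3

lemma f_cube : f ^ 3 = ψ f := by
  have hm3 : (ψ f) = T (-3) + 1 + T 3 := by
    rw [f, map_add, map_add, map_one, psi_T, psi_T]
    norm_num
  have h3' : (T (-3) : LaurentPolynomial R) = T (-1) * T (-1) * T (-1) := by
    rw [← T_add, ← T_add]; norm_num
  have h3'' : (T 3 : LaurentPolynomial R) = T 1 * T 1 * T 1 := by
    rw [← T_add, ← T_add]; norm_num
  rw [hm3, f, h3', h3'']
  linear_combination (T (-1) * T (-1) + T (-1) * T (-1) * T 1 + T (-1) + T 1
    + T (-1) * T 1 * T 1 + T 1 * T 1 + 2 * T (-1) * T 1) * h3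

lemma mul_T_apply (Q : LaurentPolynomial R) (k y : ℤ) :
    (Q * T k : LaurentPolynomial R).coeff y = Q.coeff (y - k) := by
  have h := AddMonoidAlgebra.coeff_mul_single_apply Q (1 : R) k y
  rw [mul_one] at h
  exact h

lemma key1 (P : LaurentPolynomial R) : (ψ P * f).coeff 0 = P.coeff 0 := by
  have hf : f = T (-1) + T 0 + T 1 := by rw [f, T_zero]
  rw [hf, mul_add, mul_add, AddMonoidAlgebra.coeff_add, AddMonoidAlgebra.coeff_add, Finsupp.add_apply, Finsupp.add_apply]
  simp only [mul_T_apply]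
  norm_num
  rw [psi_apply_ne P 1 (by norm_num), psi_apply_ne P (-1) (by norm_num), psi_apply_zero]
  ring

lemma key2 (P : LaurentPolynomial R) : (ψ P * f ^ 2).coeff 0 = 0 := by
  have hf : f ^ 2 = T (-2) + T (-1) + T (-1) + T 1 + T 1 + T 2 := by
    rw [f_sq]; ring
  rw [hf, mul_add, mul_add, mul_add, mul_add, mul_add,
    AddMonoidAlgebra.coeff_add, AddMonoidAlgebra.coeff_add, AddMonoidAlgebra.coeff_add,
    AddMonoidAlgebra.coeff_add, AddMonoidAlgebra.coeff_add,
    Finsupp.add_apply, Finsupp.add_apply, Finsupp.add_apply, Finsupp.add_apply,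
    Finsupp.add_apply]
  simp only [mul_T_apply]
  norm_num
  rw [psi_apply_ne P 1 (by norm_num), psi_apply_ne P (-1) (by norm_num),
    psi_apply_ne P 2 (by norm_num), psi_apply_ne P (-2) (by norm_num)]
  ring

lemma mainR : ∀ n : ℕ, 2 ∈ Nat.digits 3 n → (f ^ n).coeff 0 = 0 := by
  intro n
  induction n using Nat.strong_induction_on with
  | _ n ih =>
    intro h
    have hn : n ≠ 0 := by rintro rfl; simp at h
    rw [Nat.digits_def' (by norm_num : 1 < 3) (Nat.pos_of_ne_zero hn)] at h
    have hdecomp : f ^ n = ψ (f ^ (n / 3)) * f ^ (n % 3) := by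
      conv_lhs => rw [← Nat.div_add_mod n 3]
      rw [pow_add, pow_mul, f_cube, map_pow]
    rcases List.mem_cons.mp h with h2 | h2
    · rw [hdecomp, ← h2]
      exact key2 _
    · have hlt : n / 3 < n := Nat.div_lt_self (Nat.pos_of_ne_zero hn) (by norm_num)
      have hq := ih _ hlt h2
      have hr : n % 3 < 3 := Nat.mod_lt _ (by norm_num)
      interval_cases hcase : n % 3
      · rw [hdecomp, pow_zero, mul_one, psi_apply_zero, hq]
      · rw [hdecomp, pow_one, key1, hq]
      · rw [hdecomp]; exact key2 _
end Stmt10Aux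

theorem stmt_10 (n : ℕ) (h : 2 ∈ Nat.digits 3 n) :
    (3 : ℤ) ∣ ct ((T (-1) + 1 + T 1) ^ n) := by
  have := Stmt10Aux.mainR n h
  rw [show Stmt10Aux.f = Stmt10Aux.φ (T (-1) + 1 + T 1) by
    rw [map_add, map_add, map_one]
    show _ = Stmt10Aux.φ (AddMonoidAlgebra.single _ 1) + 1 + Stmt10Aux.φ (AddMonoidAlgebra.single _ 1)
    rw [Stmt10Aux.phi_single, Stmt10Aux.phi_single]
    rfl] at this
  rw [← map_pow, Stmt10Aux.phi_apply] at this
  have := (ZMod.intCast_zmod_eq_zero_iff_dvd _ 3).mp this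
  exact_mod_cast this
end

section
/- Let M_n be the Motzkin numbers. For every integer k > 1 and every integer n with 2·3^k ≤ n ≤ 2·3^k + 3^{k−1}, M_n ≡ 0 (mod 3). -/
open LaurentPolynomial

private lemma Tmulneg (a : ℤ) : (T a : LaurentPolynomial ℤ) * T (-a) = 1 := by
  rw [← T_add, add_neg_cancel, T_zero]

private lemma Tsq (N : ℤ) : (T N : LaurentPolynomial ℤ) ^ 2 = T (2*N) := by
  rw [T_pow]; norm_num

private lemma Tcube (N : ℤ) : (T N : LaurentPolynomial ℤ) ^ 3 = T (3*N) := by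
  rw [T_pow]; norm_num

private lemma lemC (N : ℤ) : (T (-N) + 1 + T N : LaurentPolynomial ℤ)^2
    = T (-(2*N)) + T (2*N) + 2*T (-N) + 2*T N + 3 := by
  have h := Tmulneg N
  rw [show (-(2*N)) = 2*(-N) by ring, ← Tsq, ← Tsq]
  linear_combination (2 : LaurentPolynomial ℤ) * h

private lemma lemA (N : ℤ) : (T (-N) + 1 + T N : LaurentPolynomial ℤ)^3
    = T (-(3*N)) + 1 + T (3*N)
      + 3*(T (-(2*N)) + 2*T (-N) + 2 + 2*T N + T (2*N)) := by
  have h := Tmulneg N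
  rw [show (-(3*N)) = 3*(-N) by ring, show (-(2*N)) = 2*(-N) by ring,
    ← Tsq, ← Tsq, ← Tcube, ← Tcube]
  linear_combination ((3:LaurentPolynomial ℤ) * (T N + T (-N)) + 6) * h

private lemma lemB (k : ℕ) : ∃ S : LaurentPolynomial ℤ,
    (T (-1) + 1 + T 1 : LaurentPolynomial ℤ)^(3^k)
      = T (-(3^k : ℤ)) + 1 + T ((3^k : ℤ)) + 3*S := by
  induction k with
  | zero => exact ⟨0, by norm_num⟩
  | succ k ih =>
    obtain ⟨S, hS⟩ := ih
    set N : ℤ := 3^k with hN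
    set A : LaurentPolynomial ℤ := T (-N) + 1 + T N with hA
    refine ⟨(T (-(2*N)) + 2*T (-N) + 2 + 2*T N + T (2*N))
        + 3*A^2*S + 9*A*S^2 + 9*S^3, ?_⟩
    have h3 : (-(3:ℤ)^(k+1)) = -(3*N) := by rw [hN]; ring
    have h3' : ((3:ℤ)^(k+1)) = 3*N := by rw [hN]; ring
    have he : (3:ℕ)^(k+1) = 3^k * 3 := pow_succ 3 k
    rw [he, pow_mul, hS, h3, h3']
    calc (A + 3*S)^3 = A^3 + 3*(3*A^2*S + 9*A*S^2 + 9*S^3) := by ring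
    _ = _ := by rw [lemA]; ring

private lemma capply (r : ℤ) (f : LaurentPolynomial ℤ) (z : ℤ) :
    (C r * f : LaurentPolynomial ℤ).coeff z = r * f.coeff z := by
  have : (C r : LaurentPolynomial ℤ) = AddMonoidAlgebra.single 0 r := by
    rw [single_eq_C_mul_T, T_zero, mul_one]
  rw [this, AddMonoidAlgebra.coeff_single_mul_apply, neg_zero, zero_add]

private lemma tapply (a : ℤ) (f : LaurentPolynomial ℤ) (z : ℤ) :
    (T a * f : LaurentPolynomial ℤ).coeff z = f.coeff (z - a) := by
  have : (T a : LaurentPolynomial ℤ) = AddMonoidAlgebra.single a 1 := by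
    rw [single_eq_C_mul_T, map_one, one_mul]
  rw [this, AddMonoidAlgebra.coeff_single_mul_apply, one_mul, neg_add_eq_sub]

private lemma support_lemma (m : ℕ) (z : ℤ) (hz : (m:ℤ)+2 < z ∨ z < -((m:ℤ)+2)) :
    (((T (-1) + 1 + T 1 : LaurentPolynomial ℤ)^m * (1 - T 2)) : LaurentPolynomial ℤ).coeff z = 0 := by
  classical
  set q : Polynomial ℤ := (1 + Polynomial.X + Polynomial.X^2)^m
      * (Polynomial.X^2 - Polynomial.X^4) with hq
  have hfact : (T (-1) + 1 + T 1 : LaurentPolynomial ℤ)^m * (1 - T 2)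
      = T (-((m:ℤ)+2)) * Polynomial.toLaurent q := by
    have h1 : (T (-1) + 1 + T 1 : LaurentPolynomial ℤ)
        = T (-1) * (1 + T 1 + T 2) := by
      rw [mul_add, mul_add, mul_one, ← T_add, ← T_add]; norm_num
    have h2 : (1 - T 2 : LaurentPolynomial ℤ) = T (-2) * (T 2 - T 4) := by
      rw [mul_sub, ← T_add, ← T_add]; norm_num
    rw [hq, map_mul, map_pow]
    simp only [map_add, map_sub, map_pow, Polynomial.toLaurent_one, Polynomial.toLaurent_X]
    rw [h1, h2, mul_pow, T_pow]
    rw [show (T 1 : LaurentPolynomial ℤ)^2 = T 2 by rw [T_pow]; norm_num,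
      show (T 1 : LaurentPolynomial ℤ)^4 = T 4 by rw [T_pow]; norm_num]
    rw [show ((m:ℤ)*(-1)) = -(m:ℤ) by ring]
    calc T (-(m:ℤ)) * (1 + T 1 + T 2)^m * (T (-2) * (T 2 - T 4))
        = (T (-(m:ℤ)) * T (-2)) * ((1 + T 1 + T 2)^m * (T 2 - T 4)) := by ring
      _ = _ := by rw [← T_add]; ring_nf
  rw [hfact, tapply]
  set w : ℤ := z - -((m:ℤ)+2) with hw
  by_contra hne
  have hmem : w ∈ (Polynomial.toLaurent q).coeff.support := Finsupp.mem_support_iff.mpr hne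
  rw [LaurentPolynomial.support_coeff_toLaurent] at hmem
  obtain ⟨s, hs, hsw⟩ := Finset.mem_map.mp hmem
  have hdeg : q.natDegree ≤ 2*m + 4 := by
    apply le_trans (Polynomial.natDegree_mul_le)
    have e1 : ((1 + Polynomial.X + Polynomial.X^2 : Polynomial ℤ)^m).natDegree ≤ 2*m := by
      apply le_trans (Polynomial.natDegree_pow_le)
      have : (1 + Polynomial.X + Polynomial.X^2 : Polynomial ℤ).natDegree ≤ 2 := by
        compute_degree
      exact le_trans (Nat.mul_le_mul_left m this) (by omega)
    have e2 : (Polynomial.X^2 - Polynomial.X^4 : Polynomial ℤ).natDegree ≤ 4 := by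
      compute_degree
    omega
  have hsle : s ≤ q.natDegree := Polynomial.le_natDegree_of_mem_supp s hs
  have hcast : (s:ℤ) = w := hsw
  rcases hz with h | h
  · omega
  · omega

theorem stmt_11 (k n : ℕ) (hk : 1 < k) (h1 : 2 * 3 ^ k ≤ n) (h2 : n ≤ 2 * 3 ^ k + 3 ^ (k - 1)) :
    (3 : ℤ) ∣ ct ((T (-1) + 1 + T 1) ^ n * (1 - T 2)) := by
  classical
  obtain ⟨S, hS⟩ := lemB k
  set N : ℤ := 3^k with hN
  set m : ℕ := n - 2 * 3^k with hm
  set P : LaurentPolynomial ℤ := T (-1) + 1 + T 1 with hP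
  set A : LaurentPolynomial ℤ := T (-N) + 1 + T N with hA
  set Q : LaurentPolynomial ℤ := P^m * (1 - T 2) with hQ
  have hmN : (m:ℤ) + 2 < N := by
    have h31 : (3:ℤ)^(k-1) * 3 = 3^k := by
      rw [← pow_succ]; congr 1; omega
    have hm3 : (m:ℤ) ≤ 3^(k-1) := by
      have : m ≤ 3^(k-1) := by omega
      exact_mod_cast this
    have h9 : (3:ℤ)^1 ≤ 3^(k-1) := pow_le_pow_right₀ (by norm_num) (by omega)
    rw [hN]; nlinarith
  have hNpos : 0 < N := by positivity
  have hsplit : P^n = A * A * P^m + 3 * (S*A*P^m + A*S*P^m + 3*S*S*P^m) := by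
    have hn : n = 3^k + (3^k + m) := by omega
    rw [hn, pow_add, pow_add, hS]
    ring
  have key : P^n * (1 - T 2)
      = T (-(2*N)) * Q + T (2*N) * Q + C 2 * (T (-N) * Q) + C 2 * (T N * Q)
        + C 3 * ((1 + 2*A*S + 3*S*S) * Q) := by
    have hC2 : (C (2:ℤ) : LaurentPolynomial ℤ) = 2 := by simp
    have hC3 : (C (3:ℤ) : LaurentPolynomial ℤ) = 3 := by simp
    rw [hC2, hC3, hsplit, hQ]
    have hAA : A * A = A^2 := by ring
    rw [mul_comm (A*A) (P^m)]
    calc (P ^ m * (A*A) + 3 * (S*A*P^m + A*S*P^m + 3*S*S*P^m)) * (1 - T 2)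
        = (A^2) * (P^m * (1-T 2)) + 3 * ((S*A + A*S + 3*S*S) * (P^m * (1-T 2))) := by ring
      _ = _ := by rw [hA, lemC]; ring
  have hQ2N : Q.coeff (0 - -(2*N)) = 0 := by
    rw [hQ, hP]; apply support_lemma; left; omega
  have hQ2N' : Q.coeff (0 - (2*N)) = 0 := by
    rw [hQ, hP]; apply support_lemma; right; omega
  have hQN : Q.coeff (0 - -N) = 0 := by
    rw [hQ, hP]; apply support_lemma; left; omega
  have hQN' : Q.coeff (0 - N) = 0 := by
    rw [hQ, hP]; apply support_lemma; right; omega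
  rw [ct, key]
  rw [AddMonoidAlgebra.coeff_add, AddMonoidAlgebra.coeff_add, AddMonoidAlgebra.coeff_add,
    AddMonoidAlgebra.coeff_add]
  rw [Finsupp.add_apply, Finsupp.add_apply, Finsupp.add_apply, Finsupp.add_apply]
  rw [tapply, tapply, capply, capply, capply, tapply, tapply]
  rw [hQ2N, hQ2N', hQN, hQN']
  exact ⟨_, by ring⟩
end

section
/- Let P(x) = a₋₁x⁻¹ + a₀ + a₁x with integer coefficients, a_n = ct[P(x)^n], and let p be a prime dividing a_z for some 0 < z < p. Let b_n = Σ_{i=0}^{h} c_i · a_{n+i} with integers c_i. Then the sequence (b_n mod p) contains arbitrarily long runs of consecutive zeros; in particular, for every N there exists n such that b_n ≡ b_{n+1} ≡ … ≡ b_{n+N} ≡ 0 (mod p). -/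
open LaurentPolynomial

section Aux

variable {R : Type*} [CommRing R]

/-- The Laurent trinomial with spread `s`. -/
noncomputable def Qtri (a b c : R) (s : ℤ) : LaurentPolynomial R :=
  C a * T (-s) + C b + C c * T s

lemma Qtri_eq_singles (a b c : R) (s : ℤ) :
    Qtri a b c s = AddMonoidAlgebra.single (-s) a + AddMonoidAlgebra.single 0 b + AddMonoidAlgebra.single s c := by
  simp [Qtri, single_eq_C_mul_T]

lemma laurentCharP (p : ℕ) [CharP R p] : CharP (LaurentPolynomial R) p := by
  have hCinj : Function.Injective (C : R →+* R[T;T⁻¹]) := by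
    intro x y hxy
    have := congrArg (fun Q : LaurentPolynomial R => Q.coeff 0) hxy
    rw [← single_eq_C, ← single_eq_C, AddMonoidAlgebra.coeff_single,
      AddMonoidAlgebra.coeff_single] at this
    simpa using this
  exact charP_of_injective_ringHom hCinj p

lemma Qtri_pow_char (p : ℕ) (hp : p.Prime) [CharP R p] (a b c : R)
    (ha : a ^ p = a) (hb : b ^ p = b) (hc : c ^ p = c) (s : ℤ) :
    Qtri a b c s ^ p = Qtri a b c (p * s) := by
  haveI := Fact.mk hp
  haveI : CharP (LaurentPolynomial R) p := laurentCharP p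
  haveI : ExpChar (LaurentPolynomial R) p := .prime hp
  rw [Qtri, add_pow_char, add_pow_char, mul_pow, mul_pow, ← map_pow, ← map_pow, ← map_pow,
    T_pow, T_pow, ha, hb, hc, Qtri, mul_neg]

lemma Qtri_pow_pow (p : ℕ) (hp : p.Prime) [CharP R p] (a b c : R)
    (ha : a ^ p = a) (hb : b ^ p = b) (hc : c ^ p = c) (K : ℕ) :
    Qtri a b c 1 ^ (p ^ K) = Qtri a b c ((p : ℤ) ^ K) := by
  induction K with
  | zero => simp
  | succ K ih =>
    rw [pow_succ, pow_mul, ih, Qtri_pow_char p hp a b c ha hb hc]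
    congr 1
    ring

/-- Multiplication by `s` as an additive monoid hom on `ℤ`. -/
def mulHom (s : ℤ) : ℤ →+ ℤ := AddMonoidHom.mk' (fun n => s * n) (fun x y => mul_add s x y)

/-- Stretching a Laurent polynomial by `s`. -/
noncomputable def φ (s : ℤ) : LaurentPolynomial R →+* LaurentPolynomial R :=
  AddMonoidAlgebra.mapDomainRingHom R (mulHom s)

lemma φ_apply_single (s n : ℤ) (r : R) :
    φ s (AddMonoidAlgebra.single n r) = AddMonoidAlgebra.single (s * n) r := by
  have : φ (R := R) s (AddMonoidAlgebra.single n r) = AddMonoidAlgebra.mapDomain (mulHom s) (AddMonoidAlgebra.single n r) :=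
    rfl
  rw [this, AddMonoidAlgebra.mapDomain_single]
  rfl

lemma φ_Qtri (s : ℤ) (a b c : R) : φ s (Qtri a b c 1) = Qtri a b c s := by
  rw [Qtri_eq_singles, map_add, map_add, φ_apply_single, φ_apply_single, φ_apply_single,
    Qtri_eq_singles, mul_neg_one, mul_zero, mul_one]

lemma φ_apply_zero (s : ℤ) (hs : s ≠ 0) (f : LaurentPolynomial R) : (φ s f).coeff 0 = f.coeff 0 := by
  have hinj : Function.Injective (mulHom s) := by
    intro x y hxy
    exact mul_left_cancel₀ hs hxy
  have h0 : (mulHom s) 0 = 0 := map_zero _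
  have : (φ (R := R) s f).coeff ((mulHom s) 0) = f.coeff 0 := Finsupp.mapDomain_apply hinj f.coeff 0
  rwa [h0] at this

lemma φ_support (s : ℤ) (f : LaurentPolynomial R) : ∀ k ∈ (φ s f).coeff.support, s ∣ k := by
  classical
  intro k hk
  have hsub : (φ (R := R) s f).coeff.support ⊆ f.coeff.support.image (mulHom s) :=
    Finsupp.mapDomain_support
  obtain ⟨j, _, hj⟩ := Finset.mem_image.mp (hsub hk)
  exact ⟨j, hj.symm⟩

lemma Qtri_pow_support (a b c : R) (m : ℕ) :
    ∀ k ∈ ((Qtri a b c 1) ^ m).coeff.support, |k| ≤ (m : ℤ) := by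
  classical
  induction m with
  | zero =>
    intro k hk
    rw [pow_zero] at hk
    have : k ∈ (Finsupp.single (0 : ℤ) (1 : R)).support := hk
    have hk0 : k = 0 := Finset.mem_singleton.mp (Finsupp.support_single_subset this)
    simp [hk0]
  | succ m ih =>
    intro k hk
    rw [pow_succ] at hk
    have := AddMonoidAlgebra.support_coeff_mul_subset _ _ hk
    obtain ⟨a₁, h1, a₂, h2, hsum⟩ := Finset.mem_add.mp this
    have hb1 : |a₁| ≤ (m : ℤ) := ih a₁ h1
    have hb2 : |a₂| ≤ 1 := by
      rw [Qtri_eq_singles, AddMonoidAlgebra.coeff_add, AddMonoidAlgebra.coeff_add,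
        AddMonoidAlgebra.coeff_single, AddMonoidAlgebra.coeff_single, AddMonoidAlgebra.coeff_single] at h2
      rcases Finset.mem_union.mp (Finsupp.support_add h2) with h3 | h3
      · rcases Finset.mem_union.mp (Finsupp.support_add h3) with h4 | h4
        · rw [Finset.mem_singleton.mp (Finsupp.support_single_subset h4)]; norm_num
        · rw [Finset.mem_singleton.mp (Finsupp.support_single_subset h4)]; norm_num
      · rw [Finset.mem_singleton.mp (Finsupp.support_single_subset h3)]; norm_num
    rw [← hsum]
    calc |a₁ + a₂| ≤ |a₁| + |a₂| := abs_add_le _ _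
      _ ≤ (m : ℤ) + 1 := add_le_add hb1 hb2
      _ = ((m + 1 : ℕ) : ℤ) := by push_cast; ring

lemma conv_zero (f g : LaurentPolynomial R) (d : ℤ)
    (hf : ∀ k ∈ f.coeff.support, d ∣ k) (hg : ∀ k ∈ g.coeff.support, |k| < d) :
    (f * g).coeff 0 = f.coeff 0 * g.coeff 0 := by
  classical
  rw [AddMonoidAlgebra.coeff_mul]
  rw [Finsupp.sum]
  simp only [Finsupp.sum]
  rw [Finset.sum_eq_single (0 : ℤ)]
  · rw [Finset.sum_eq_single (0 : ℤ)]
    · simp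
    · intro a₂ _ hne
      rw [if_neg]
      simpa using hne
    · intro h0
      have : g.coeff 0 = 0 := Finsupp.notMem_support_iff.mp h0
      simp [this]
  · intro a₁ h1 hne
    apply Finset.sum_eq_zero
    intro a₂ h2
    rw [if_neg]
    intro hsum
    have hd := hf a₁ h1
    have habs := hg a₂ h2
    have ha2 : a₂ = -a₁ := by linarith
    have : |a₁| < d := by rwa [ha2, abs_neg] at habs
    exact hne (Int.eq_zero_of_abs_lt_dvd hd this)
  · intro h0
    apply Finset.sum_eq_zero
    intro a₂ _
    have : f.coeff 0 = 0 := Finsupp.notMem_support_iff.mp h0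
    simp [this]

/-- The coefficient-wise map of Laurent polynomials along a ring hom `ℤ →+* R`. -/
noncomputable def ψ (f : ℤ →+* R) : LaurentPolynomial ℤ →+* LaurentPolynomial R :=
  AddMonoidAlgebra.liftNCRingHom ((C : R →+* R[T;T⁻¹]).comp f)
    { toFun := fun n => T (Multiplicative.toAdd n)
      map_one' := T_zero
      map_mul' := fun x y => T_add _ _ }
    (fun _ _ => Commute.all _ _)

lemma ψ_single (f : ℤ →+* R) (n : ℤ) (r : ℤ) :
    ψ f (AddMonoidAlgebra.single n r) = AddMonoidAlgebra.single n (f r) := by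
  have : ψ f (AddMonoidAlgebra.single n r)
      = ((C : R →+* R[T;T⁻¹]).comp f) r * T n := by
    exact AddMonoidAlgebra.liftNC_single _ _ _ _
  rw [this, single_eq_C_mul_T]
  rfl

lemma ψ_apply (f : ℤ →+* R) (Q : LaurentPolynomial ℤ) (k : ℤ) : (ψ f Q).coeff k = f (Q.coeff k) := by
  induction Q using AddMonoidAlgebra.induction_linear with
  | zero => simp
  | add u v hu hv => rw [map_add, AddMonoidAlgebra.coeff_add, Finsupp.add_apply, hu, hv, AddMonoidAlgebra.coeff_add, Finsupp.add_apply, map_add]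
  | single n r =>
    rw [ψ_single, AddMonoidAlgebra.coeff_single, AddMonoidAlgebra.coeff_single, Finsupp.single_apply, Finsupp.single_apply]
    split <;> simp

lemma ψ_Ptri (f : ℤ →+* R) (am1 a0 a1 : ℤ) :
    ψ f (Ptri am1 a0 a1) = Qtri (f am1) (f a0) (f a1) 1 := by
  have h1 : Ptri am1 a0 a1 = Qtri am1 a0 a1 1 := rfl
  rw [h1, Qtri_eq_singles, map_add, map_add, ψ_single, ψ_single, ψ_single, Qtri_eq_singles]

end Aux

theorem stmt_12 (am1 a0 a1 : ℤ) (p : ℕ) (hp : p.Prime) (z : ℕ) (hz0 : 0 < z) (hzp : z < p)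
    (hdvd : (p : ℤ) ∣ ct ((Ptri am1 a0 a1) ^ z)) (h : ℕ) (c : ℕ → ℤ) (N : ℕ) :
    ∃ n : ℕ, ∀ j ≤ N,
      (p : ℤ) ∣ ∑ i ∈ Finset.range (h + 1), c i * ct ((Ptri am1 a0 a1) ^ (n + j + i)) := by
  classical
  haveI : Fact p.Prime := ⟨hp⟩
  set f : ℤ →+* ZMod p := Int.castRingHom (ZMod p)
  set a : ZMod p := f am1
  set b : ZMod p := f a0
  set cc : ZMod p := f a1
  have ha : a ^ p = a := ZMod.pow_card a
  have hb : b ^ p = b := ZMod.pow_card b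
  have hcc : cc ^ p = cc := ZMod.pow_card cc
  set Q1 : LaurentPolynomial (ZMod p) := Qtri a b cc 1 with hQ1
  set K : ℕ := N + h
  have hK : N + h < p ^ K := Nat.lt_pow_self hp.one_lt
  refine ⟨z * p ^ K, ?_⟩
  intro j hj
  apply Finset.dvd_sum
  intro i hi
  have him : i ≤ h := Nat.lt_succ_iff.mp (Finset.mem_range.mp hi)
  have hm : j + i < p ^ K := lt_of_le_of_lt (add_le_add hj him) hK
  refine Dvd.dvd.mul_left ?_ (c i)
  -- reduce to a statement in `ZMod p`
  rw [← ZMod.intCast_zmod_eq_zero_iff_dvd]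
  have hψ : ∀ e : ℕ, ((ct ((Ptri am1 a0 a1) ^ e) : ℤ) : ZMod p) = (Q1 ^ e).coeff 0 := by
    intro e
    rw [ct, show ((Ptri am1 a0 a1 ^ e).coeff 0 : ZMod p) = f ((Ptri am1 a0 a1 ^ e).coeff 0) from rfl,
      ← ψ_apply f, map_pow, ψ_Ptri]
  rw [hψ]
  -- the exponent decomposes
  have hexp : z * p ^ K + j + i = p ^ K * z + (j + i) := by ring
  rw [hexp, pow_add, pow_mul, hQ1, Qtri_pow_pow p hp a b cc ha hb hcc K, ← φ_Qtri, ← map_pow]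
  have hd0 : ((p : ℤ) ^ K) ≠ 0 := pow_ne_zero K (Int.natCast_ne_zero.mpr hp.pos.ne')
  rw [conv_zero _ _ ((p : ℤ) ^ K) (φ_support _ _) ?_]
  · rw [φ_apply_zero _ hd0]
    have hz : ((Qtri a b cc 1) ^ z).coeff 0 = 0 := by
      rw [← hψ z]
      rwa [ZMod.intCast_zmod_eq_zero_iff_dvd]
    rw [hz, zero_mul]
  · intro k hk
    have := Qtri_pow_support a b cc (j + i) k hk
    calc |k| ≤ ((j + i : ℕ) : ℤ) := this
      _ < ((p ^ K : ℕ) : ℤ) := by exact_mod_cast hm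
      _ = (p : ℤ) ^ K := by push_cast; ring
end

section
/- Let P(x) = a₋₁x⁻¹ + a₀ + a₁x with integer coefficients, a_n = ct[P(x)^n], p a prime dividing some a_n, and b_n = Σ_{i=0}^{h} c_i·a_{n+i} with integer c_i. Then the set {n : p ∣ b_n} has natural density 1. -/
open LaurentPolynomial

/-! ### Auxiliary: reduction to ordinary polynomial coefficients -/

open Polynomial in
noncomputable def qtri (am1 a0 a1 : ℤ) : Polynomial ℤ :=
  Polynomial.C am1 + Polynomial.C a0 * Polynomial.X + Polynomial.C a1 * Polynomial.X ^ 2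

open Polynomial in
lemma Ptri_eq (am1 a0 a1 : ℤ) :
    Ptri am1 a0 a1 = toLaurent (qtri am1 a0 a1) * T (-1) := by
  rw [Ptri, qtri]
  simp only [map_add, map_mul, toLaurent_C, toLaurent_X, map_pow, T_pow]
  rw [add_mul, add_mul, mul_T_assoc, mul_T_assoc]
  norm_num

lemma toLaurent_apply_natCast (g : Polynomial ℤ) (n : ℕ) :
    (Polynomial.toLaurent g).coeff (n : ℤ) = g.coeff n := by
  rw [coeff_toLaurent]
  exact Finsupp.mapDomain_apply Nat.castEmbedding.injective _ _

open Polynomial in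
lemma ct_pow (am1 a0 a1 : ℤ) (n : ℕ) :
    ct ((Ptri am1 a0 a1) ^ n) = ((qtri am1 a0 a1) ^ n).coeff n := by
  rw [ct, Ptri_eq, mul_pow, ← map_pow, T_pow]
  rw [show ((n:ℕ):ℤ) * -1 = -(n:ℤ) by ring]
  have h1 : (T (-(n:ℤ)) : LaurentPolynomial ℤ) = AddMonoidAlgebra.single (-(n:ℤ)) 1 := rfl
  rw [h1, AddMonoidAlgebra.coeff_mul_single_apply, zero_add, neg_neg, toLaurent_apply_natCast, mul_one]

/-! ### Lucas-type recursion mod p -/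

open Polynomial in
lemma key_recursion (p : ℕ) [Fact p.Prime] (f : Polynomial (ZMod p)) (hf : f.natDegree ≤ 2)
    (m r : ℕ) (hr : r < p) :
    (f ^ (p * m + r)).coeff (p * m + r) = (f ^ m).coeff m * (f ^ r).coeff r := by
  have hp : 0 < p := (Fact.out : p.Prime).pos
  have hfp : f ^ p = Polynomial.expand (ZMod p) p f := by
    rw [ZMod.expand_card]
  have hsplit : f ^ (p * m + r) = Polynomial.expand (ZMod p) p (f ^ m) * f ^ r := by
    rw [pow_add, pow_mul, hfp, map_pow]
  rw [hsplit, Polynomial.coeff_mul]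
  rw [Finset.sum_eq_single (p * m, r)]
  · rw [Polynomial.coeff_expand_mul' hp]
  · rintro ⟨i, j⟩ hmem hne
    rw [Finset.HasAntidiagonal.mem_antidiagonal] at hmem
    by_cases hdi : p ∣ i
    · obtain ⟨i', rfl⟩ := hdi
      by_cases hj : 2 * r < j
      · have hdle : r * f.natDegree ≤ 2 * r := by
          have := Nat.mul_le_mul_left r hf
          omega
        have : (f ^ r).natDegree < j :=
          lt_of_le_of_lt ((natDegree_pow_le).trans hdle) hj
        rw [Polynomial.coeff_eq_zero_of_natDegree_lt this, mul_zero]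
      · exfalso
        push_neg at hj
        have hi'm : i' = m := by
          rcases lt_trichotomy i' m with hlt | heq | hgt
          · have : p * (i' + 1) ≤ p * m := Nat.mul_le_mul_left p hlt
            rw [Nat.mul_add, Nat.mul_one] at this
            omega
          · exact heq
          · have : p * (m + 1) ≤ p * i' := Nat.mul_le_mul_left p hgt
            rw [Nat.mul_add, Nat.mul_one] at this
            omega
        subst hi'm
        have : j = r := by omega
        subst this
        exact hne rfl
    · rw [Polynomial.coeff_expand hp, if_neg hdi, zero_mul]
  · intro hmem
    exact absurd ((Finset.HasAntidiagonal.mem_antidiagonal (n := p * m + r) (a := (p * m, r))).mpr rfl) hmem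

section Lucas
open Polynomial
variable {p : ℕ} [Fact p.Prime] {f : Polynomial (ZMod p)}

lemma Acoef_split (hf : f.natDegree ≤ 2) (n : ℕ) :
    (f ^ n).coeff n = (f ^ (n / p)).coeff (n / p) * (f ^ (n % p)).coeff (n % p) := by
  conv_lhs => rw [show n = p * (n / p) + n % p from (Nat.div_add_mod n p).symm]
  exact key_recursion p f hf (n / p) (n % p) (Nat.mod_lt _ (Fact.out : p.Prime).pos)

lemma Acoef_digit (hf : f.natDegree ≤ 2) (d : ℕ) (hd : (f ^ d).coeff d = 0) :
    ∀ k n, n / p ^ k % p = d → (f ^ n).coeff n = 0 := by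
  intro k
  induction k with
  | zero =>
    intro n hn
    rw [pow_zero, Nat.div_one] at hn
    rw [Acoef_split hf, hn, hd, mul_zero]
  | succ k ih =>
    intro n hn
    rw [Acoef_split hf]
    have : n / p / p ^ k % p = d := by
      rw [Nat.div_div_eq_div_mul, ← pow_succ']
      exact hn
    rw [ih _ this, zero_mul]

lemma exists_small_digit (hf : f.natDegree ≤ 2) :
    ∀ n, (f ^ n).coeff n = 0 → ∃ d, d < p ∧ (f ^ d).coeff d = 0 := by
  intro n
  induction n using Nat.strong_induction_on with
  | _ n ih =>
    intro hn
    by_cases hnp : n < p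
    · exact ⟨n, hnp, hn⟩
    · rw [Acoef_split hf] at hn
      rcases mul_eq_zero.mp hn with h0 | h0
      · exact ih (n / p)
          (Nat.div_lt_self (by have := (Fact.out : p.Prime).pos; omega)
            (Fact.out : p.Prime).one_lt) h0
      · exact ⟨n % p, Nat.mod_lt _ (Fact.out : p.Prime).pos, h0⟩
end Lucas

/-! ### Base-p digit lemmas -/

lemma digit_mod (p M k n : ℕ) (hk : k < M) :
    (n % p ^ M) / p ^ k % p = n / p ^ k % p := by
  have h1 : n % p ^ M / p ^ k = n / p ^ k % p ^ (M - k) := by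
    rw [show p ^ M = p ^ k * p ^ (M - k) by rw [← pow_add]; congr 1; omega]
    exact Nat.mod_mul_right_div_self n (p ^ k) (p ^ (M - k))
  rw [h1]
  exact Nat.mod_mod_of_dvd _ (dvd_pow_self p (by omega : M - k ≠ 0))

lemma digit_add (p k d hh n i : ℕ) (hp : 1 < p) (hhh : hh < p ^ k) (hi : i ≤ hh)
    (h1 : n / p ^ (k + 1) % p = d) (h2 : n / p ^ k % p ≤ p - 2) :
    (n + i) / p ^ (k + 1) % p = d := by
  have hpk : 0 < p ^ k := Nat.pow_pos (n := k) (by omega)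
  have hmod : n % (p ^ k * p) = n % p ^ k + p ^ k * (n / p ^ k % p) := Nat.mod_mul
  have hmul : p ^ k * (n / p ^ k % p + 2) ≤ p ^ k * p := Nat.mul_le_mul_left _ (by omega)
  rw [Nat.mul_add] at hmul
  have hlt : n % p ^ (k + 1) + i < p ^ (k + 1) := by
    have hm : n % p ^ k < p ^ k := Nat.mod_lt _ hpk
    rw [pow_succ]
    omega
  clear hmod hmul
  have hdm := Nat.div_add_mod n (p ^ (k + 1))
  have hni : n + i = (n % p ^ (k + 1) + i) + p ^ (k + 1) * (n / p ^ (k + 1)) := by omega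
  rw [hni, Nat.add_mul_div_left _ _ (Nat.pow_pos (n := k + 1) (by omega)),
    Nat.div_eq_of_lt hlt, zero_add]
  exact h1

def GoodAt (p d : ℕ) (n : ℕ) (k : ℕ) : Prop :=
  n / p ^ (k + 1) % p = d ∧ n / p ^ k % p ≤ p - 2

instance (p d n k : ℕ) : Decidable (GoodAt p d n k) := by unfold GoodAt; infer_instance

/-! ### Counting lemmas -/

lemma count_bad (p d M : ℕ) (hp : 1 < p) (hd : d < p) (L : ℕ) :
    ((Finset.range (p ^ (M + 2 * L))).filter
      (fun n => ∀ j < L, ¬ GoodAt p d n (M + 2 * j))).card ≤ p ^ M * (p ^ 2 - 1) ^ L := by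
  induction L with
  | zero => simpa using Finset.card_filter_le _ _
  | succ L ih =>
    set Q := p ^ (M + 2 * L) with hQ
    have hQpos : 0 < Q := Nat.pow_pos (by omega)
    have hcard : ((Finset.range (p ^ (M + 2 * (L + 1)))).filter
        (fun n => ∀ j < L + 1, ¬ GoodAt p d n (M + 2 * j))).card ≤
        (((Finset.range (p ^ 2)).erase (d * p)) ×ˢ
          ((Finset.range Q).filter (fun n => ∀ j < L, ¬ GoodAt p d n (M + 2 * j)))).card := by
      apply Finset.card_le_card_of_injOn (fun n => (n / Q, n % Q))
      · intro n hn
        rw [Finset.mem_coe, Finset.mem_filter, Finset.mem_range] at hn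
        obtain ⟨hnlt, hbad⟩ := hn
        rw [Finset.mem_coe, Finset.mem_product]
        dsimp only
        constructor
        · rw [Finset.mem_erase, Finset.mem_range]
          constructor
          · intro heq
            apply hbad L (by omega)
            constructor
            · have h1 : n / p ^ (M + 2 * L + 1) = d := by
                rw [show M + 2 * L + 1 = (M + 2 * L) + 1 from rfl, pow_succ,
                  ← Nat.div_div_eq_div_mul, ← hQ, heq, Nat.mul_div_cancel _ (by omega)]
              rw [show M + 2 * L + 1 = M + 2 * L + 1 from rfl] at h1
              rw [h1, Nat.mod_eq_of_lt hd]
            · rw [← hQ, heq, Nat.mul_mod_left]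
              omega
          · have : n < Q * p ^ 2 := by
              rw [hQ, ← pow_add, show M + 2 * L + 2 = M + 2 * (L + 1) from by omega]
              exact hnlt
            exact Nat.div_lt_of_lt_mul (by omega)
        · rw [Finset.mem_filter, Finset.mem_range]
          refine ⟨Nat.mod_lt _ hQpos, ?_⟩
          intro j hj hgood
          apply hbad j (by omega)
          obtain ⟨hg1, hg2⟩ := hgood
          constructor
          · rw [← digit_mod p (M + 2 * L) (M + 2 * j + 1) n (by omega), ← hQ]
            exact hg1
          · rw [← digit_mod p (M + 2 * L) (M + 2 * j) n (by omega), ← hQ]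
            exact hg2
      · intro a ha b hb hab
        simp only [Prod.mk.injEq] at hab
        have : Q * (a / Q) + a % Q = Q * (b / Q) + b % Q := by rw [hab.1, hab.2]
        rwa [Nat.div_add_mod, Nat.div_add_mod] at this
    refine hcard.trans ?_
    rw [Finset.card_product, Finset.card_erase_of_mem, Finset.card_range]
    · calc (p ^ 2 - 1) * ((Finset.range Q).filter
            (fun n => ∀ j < L, ¬ GoodAt p d n (M + 2 * j))).card
          ≤ (p ^ 2 - 1) * (p ^ M * (p ^ 2 - 1) ^ L) := Nat.mul_le_mul_left _ ih
        _ = p ^ M * (p ^ 2 - 1) ^ (L + 1) := by ring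
    · rw [Finset.mem_range]
      have : d * p < p * p := by
        apply Nat.mul_lt_mul_of_lt_of_le hd (le_refl p) (by omega)
      rw [pow_two]
      omega

lemma count_periodic (Q N : ℕ) (hQ : 0 < Q) (π : ℕ → Prop) [DecidablePred π]
    (hper : ∀ n, π n ↔ π (n % Q)) :
    ((Finset.range N).filter π).card ≤ (N / Q + 1) * ((Finset.range Q).filter π).card := by
  have hcard : ((Finset.range N).filter π).card ≤
      ((Finset.range (N / Q + 1)) ×ˢ ((Finset.range Q).filter π)).card := by
    apply Finset.card_le_card_of_injOn (fun n => (n / Q, n % Q))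
    · intro n hn
      rw [Finset.mem_coe, Finset.mem_filter, Finset.mem_range] at hn
      rw [Finset.mem_coe, Finset.mem_product, Finset.mem_range, Finset.mem_filter, Finset.mem_range]
      dsimp only
      exact ⟨by have := Nat.div_le_div_right (c := Q) (Nat.le_of_lt hn.1); omega,
        Nat.mod_lt _ hQ, (hper n).mp hn.2⟩
    · intro a ha b hb hab
      simp only [Prod.mk.injEq] at hab
      have : Q * (a / Q) + a % Q = Q * (b / Q) + b % Q := by rw [hab.1, hab.2]
      rwa [Nat.div_add_mod, Nat.div_add_mod] at this
  refine hcard.trans ?_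
  rw [Finset.card_product, Finset.card_range]

/-! ### Main theorem -/

theorem stmt_14 (am1 a0 a1 : ℤ) (p : ℕ) (hp : p.Prime)
    (hdvd : ∃ n : ℕ, (p : ℤ) ∣ ct ((Ptri am1 a0 a1) ^ n)) (h : ℕ) (c : ℕ → ℤ) :
    Filter.Tendsto
      (fun N : ℕ =>
        (((Finset.range N).filter fun n =>
            (p : ℤ) ∣ ∑ i ∈ Finset.range (h + 1), c i * ct ((Ptri am1 a0 a1) ^ (n + i))).card : ℝ)
          / N)
      Filter.atTop (nhds 1) := by
  haveI : Fact p.Prime := ⟨hp⟩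
  have hp1 : 1 < p := hp.one_lt
  set f : Polynomial (ZMod p) := (qtri am1 a0 a1).map (Int.castRingHom (ZMod p)) with hfdef
  have hfdeg : f.natDegree ≤ 2 := by
    refine (Polynomial.natDegree_map_le).trans ?_
    unfold qtri
    compute_degree
  have hcoef : ∀ n : ℕ, ((p:ℤ) ∣ ct ((Ptri am1 a0 a1) ^ n)) ↔ (f ^ n).coeff n = 0 := by
    intro n
    rw [ct_pow, ← ZMod.intCast_zmod_eq_zero_iff_dvd]
    have : (f ^ n).coeff n = ((((qtri am1 a0 a1) ^ n).coeff n : ℤ) : ZMod p) := by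
      rw [hfdef, ← Polynomial.map_pow, Polynomial.coeff_map]
      rfl
    rw [this]
  obtain ⟨n0, hn0⟩ := hdvd
  rw [hcoef] at hn0
  obtain ⟨d, hdp, hAd⟩ := exists_small_digit hfdeg n0 hn0
  have hhM : h < p ^ h := Nat.lt_pow_self hp1
  -- main divisibility transfer
  have main : ∀ n j : ℕ, GoodAt p d n (h + 2 * j) →
      (p:ℤ) ∣ ∑ i ∈ Finset.range (h + 1), c i * ct ((Ptri am1 a0 a1) ^ (n + i)) := by
    rintro n j ⟨hg1, hg2⟩
    apply Finset.dvd_sum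
    intro i hi
    rw [Finset.mem_range] at hi
    apply Dvd.dvd.mul_left
    rw [hcoef]
    apply Acoef_digit hfdeg d hAd (h + 2 * j + 1) (n + i)
    exact digit_add p (h + 2 * j) d h n i hp1
      (lt_of_lt_of_le hhM (Nat.pow_le_pow_right (by omega) (by omega))) (by omega) hg1 hg2
  -- density argument
  rw [Metric.tendsto_atTop]
  intro ε hε
  set q : ℝ := ((p:ℝ) ^ 2 - 1) / (p:ℝ) ^ 2 with hqdef
  have hp0R : (0:ℝ) < (p:ℝ) := by exact_mod_cast hp.pos
  have hp1R : (1:ℝ) ≤ (p:ℝ) := by exact_mod_cast hp.one_lt.le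
  have hp2R : (0:ℝ) < (p:ℝ) ^ 2 := by positivity
  have hq0 : 0 ≤ q := by
    apply div_nonneg _ (le_of_lt hp2R)
    nlinarith
  have hq1 : q < 1 := by
    rw [hqdef, div_lt_one hp2R]
    linarith
  have htend : Filter.Tendsto (fun L : ℕ => 2 * q ^ L) Filter.atTop (nhds 0) := by
    have h0 := tendsto_pow_atTop_nhds_zero_of_lt_one hq0 hq1
    simpa using h0.const_mul 2
  obtain ⟨L, hL⟩ := (htend.eventually_lt_const hε).exists
  refine ⟨p ^ (h + 2 * L), fun N hN => ?_⟩
  set Q := p ^ (h + 2 * L) with hQdef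
  have hQpos : 0 < Q := Nat.pow_pos hp.pos
  have hNpos : 0 < N := lt_of_lt_of_le hQpos hN
  have hsplitcard := Finset.card_filter_add_card_filter_not (s := Finset.range N)
      (p := fun n => (p : ℤ) ∣ ∑ i ∈ Finset.range (h + 1), c i * ct ((Ptri am1 a0 a1) ^ (n + i)))
  have hsubset : ((Finset.range N).filter fun n =>
        ¬ ((p : ℤ) ∣ ∑ i ∈ Finset.range (h + 1), c i * ct ((Ptri am1 a0 a1) ^ (n + i)))) ⊆
      ((Finset.range N).filter fun n => ∀ j < L, ¬ GoodAt p d n (h + 2 * j)) := by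
    intro x hx
    rw [Finset.mem_filter] at hx ⊢
    refine ⟨hx.1, fun j hj hgood => hx.2 (main x j hgood)⟩
  have hGmod : ∀ n : ℕ, ∀ j, j < L → (GoodAt p d (n % Q) (h + 2 * j) ↔ GoodAt p d n (h + 2 * j)) := by
    intro n j hj
    unfold GoodAt
    rw [hQdef, digit_mod p _ _ _ (by omega), digit_mod p _ _ _ (by omega)]
  have hper : ∀ n : ℕ, (∀ j < L, ¬ GoodAt p d n (h + 2 * j)) ↔
      (∀ j < L, ¬ GoodAt p d (n % Q) (h + 2 * j)) := fun n =>
    ⟨fun H j hj hg => H j hj ((hGmod n j hj).mp hg),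
     fun H j hj hg => H j hj ((hGmod n j hj).mpr hg)⟩
  have hbound : ((Finset.range N).filter fun n => ∀ j < L, ¬ GoodAt p d n (h + 2 * j)).card
      ≤ (N / Q + 1) * (p ^ h * (p ^ 2 - 1) ^ L) := by
    refine (count_periodic Q N hQpos _ hper).trans ?_
    refine Nat.mul_le_mul_left _ ?_
    rw [hQdef]
    exact count_bad p d h hp1 hdp L
  have hBle : ((Finset.range N).filter fun n =>
        ¬ ((p : ℤ) ∣ ∑ i ∈ Finset.range (h + 1), c i * ct ((Ptri am1 a0 a1) ^ (n + i)))).card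
      ≤ (N / Q + 1) * (p ^ h * (p ^ 2 - 1) ^ L) :=
    (Finset.card_le_card hsubset).trans hbound
  set Gc := ((Finset.range N).filter fun n =>
      (p : ℤ) ∣ ∑ i ∈ Finset.range (h + 1), c i * ct ((Ptri am1 a0 a1) ^ (n + i))).card with hGc
  set Bc := ((Finset.range N).filter fun n =>
      ¬ ((p : ℤ) ∣ ∑ i ∈ Finset.range (h + 1), c i * ct ((Ptri am1 a0 a1) ^ (n + i)))).card with hBc
  have hNR : (0:ℝ) < (N:ℝ) := by exact_mod_cast hNpos
  have hQR : (0:ℝ) < (Q:ℝ) := by exact_mod_cast hQpos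
  have hGB : (Gc:ℝ) + (Bc:ℝ) = (N:ℝ) := by
    rw [Finset.card_range] at hsplitcard
    exact_mod_cast congrArg (Nat.cast : ℕ → ℝ) hsplitcard
  rw [Real.dist_eq]
  have heq : (Gc:ℝ)/(N:ℝ) - 1 = -((Bc:ℝ)/(N:ℝ)) := by
    field_simp
    linarith
  rw [heq, abs_neg, abs_of_nonneg (div_nonneg (Nat.cast_nonneg _) hNR.le)]
  -- now show Bc/N ≤ 2 q^L < ε
  have hdivle : ((N / Q + 1 : ℕ):ℝ) ≤ 2 * (N:ℝ) / (Q:ℝ) := by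
    have h1 : ((N / Q : ℕ):ℝ) ≤ (N:ℝ)/(Q:ℝ) := Nat.cast_div_le
    have h2 : (1:ℝ) ≤ (N:ℝ)/(Q:ℝ) := by
      rw [le_div_iff₀ hQR, one_mul]
      exact_mod_cast hN
    push_cast
    have : 2 * (N:ℝ) / (Q:ℝ) = (N:ℝ)/(Q:ℝ) + (N:ℝ)/(Q:ℝ) := by ring
    rw [this]
    linarith
  have h12 : (1:ℕ) ≤ p ^ 2 := Nat.one_le_pow _ _ hp.pos
  have hBLcast : ((p ^ h * (p ^ 2 - 1) ^ L : ℕ):ℝ) = (p:ℝ)^h * ((p:ℝ)^2 - 1)^L := by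
    rw [Nat.cast_mul, Nat.cast_pow, Nat.cast_pow, Nat.cast_sub h12]
    push_cast
    ring
  have hQcast : (Q:ℝ) = (p:ℝ)^h * ((p:ℝ)^2)^L := by
    rw [hQdef]
    push_cast
    rw [pow_add, pow_mul]
  have hphpos : (0:ℝ) < (p:ℝ)^h := pow_pos hp0R h
  have hp2Lpos : (0:ℝ) < ((p:ℝ)^2)^L := pow_pos hp2R L
  have hfinal : (Bc:ℝ)/(N:ℝ) ≤ 2 * q ^ L := by
    rw [div_le_iff₀ hNR]
    have hB2 : (Bc:ℝ) ≤ ((N / Q + 1 : ℕ):ℝ) * ((p ^ h * (p ^ 2 - 1) ^ L : ℕ):ℝ) := by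
      exact_mod_cast hBle
    calc (Bc:ℝ) ≤ (2 * (N:ℝ) / (Q:ℝ)) * ((p:ℝ)^h * ((p:ℝ)^2 - 1)^L) := by
          rw [← hBLcast]
          exact hB2.trans (mul_le_mul_of_nonneg_right hdivle (by positivity))
      _ = 2 * q ^ L * (N:ℝ) := by
          rw [hqdef, div_pow, hQcast]
          field_simp
  linarith
end

section
/- Let P(x) = a₋₁x⁻¹ + a₀ + a₁x with integer coefficients, a_n = ct[P(x)^n], and p a prime. Then p divides a_n for some n if and only if p divides a_n for some n < p. -/
open LaurentPolynomial

section Aux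

open Finsupp AddMonoidAlgebra

variable {R : Type*} [CommRing R]

/-- Reduce coefficients: the ℤ-algebra map sending `T n` to `T n`. -/
noncomputable def piR (R : Type*) [CommRing R] :
    LaurentPolynomial ℤ →ₐ[ℤ] LaurentPolynomial R :=
  AddMonoidAlgebra.lift ℤ _ ℤ
    { toFun := fun n => (T (Multiplicative.toAdd n) : LaurentPolynomial R)
      map_one' := by show (T (Multiplicative.toAdd (1 : Multiplicative ℤ)) : LaurentPolynomial R) = 1; rw [toAdd_one, T_zero]
      map_mul' := fun a b => by
        show (T (Multiplicative.toAdd (a * b)) : LaurentPolynomial R) = T _ * T _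
        rw [toAdd_mul, T_add] }

lemma piR_single (n : ℤ) (r : ℤ) :
    piR R (AddMonoidAlgebra.single n r) = AddMonoidAlgebra.single n ((r : ℤ) : R) := by
  rw [piR, AddMonoidAlgebra.lift_single]
  show r • (AddMonoidAlgebra.single n (1:R)) = _
  rw [AddMonoidAlgebra.smul_single, zsmul_one]

lemma piR_apply (X : LaurentPolynomial ℤ) (k : ℤ) :
    (piR R X).coeff k = ((X.coeff k : ℤ) : R) := by
  induction X using AddMonoidAlgebra.induction_linear with
  | zero => simp
  | add f g hf hg =>
      rw [map_add]
      rw [AddMonoidAlgebra.coeff_add, AddMonoidAlgebra.coeff_add, Finsupp.add_apply, Finsupp.add_apply]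
      rw [hf, hg]; push_cast; ring
  | single n r =>
      rw [piR_single]
      rw [AddMonoidAlgebra.coeff_single, AddMonoidAlgebra.coeff_single]
      rcases eq_or_ne n k with rfl | h
      · erw [Finsupp.single_eq_same, Finsupp.single_eq_same]
      · erw [Finsupp.single_eq_of_ne h.symm, Finsupp.single_eq_of_ne h.symm]
        rw [Int.cast_zero]

end Aux

section ZModSide

open Finsupp AddMonoidAlgebra

variable {p : ℕ} (hp : p.Prime)

/-- The trinomial with exponents `±k` over `ZMod p`. -/
noncomputable def Qt (a b c : ZMod p) (k : ℤ) : LaurentPolynomial (ZMod p) :=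
  AddMonoidAlgebra.single (-k) a + AddMonoidAlgebra.single 0 b + AddMonoidAlgebra.single k c

lemma piR_Ptri (am1 a0 a1 : ℤ) :
    piR (ZMod p) (Ptri am1 a0 a1) = Qt (am1 : ZMod p) a0 a1 1 := by
  have h : Ptri am1 a0 a1
      = (AddMonoidAlgebra.single (-1) am1 : LaurentPolynomial ℤ) + (AddMonoidAlgebra.single 0 a0 : LaurentPolynomial ℤ) + (AddMonoidAlgebra.single 1 a1 : LaurentPolynomial ℤ) := by
    rw [Ptri]
    rw [single_eq_C_mul_T, single_eq_C_mul_T, single_eq_C_mul_T, T_zero, mul_one]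
  rw [h, map_add, map_add, piR_single, piR_single, piR_single, Qt]

lemma charP_Laurent : CharP (LaurentPolynomial (ZMod p)) p := by
  have hC : Function.Injective (LaurentPolynomial.C : ZMod p →+* LaurentPolynomial (ZMod p)) := by
    intro x y h
    exact AddMonoidAlgebra.single_right_injective (R := ZMod p) (M := ℤ) (m := 0) h
  exact charP_of_injective_ringHom hC p

include hp in
lemma Qt_pow_p (a b c : ZMod p) : Qt a b c 1 ^ p = Qt a b c (p : ℤ) := by
  haveI : Fact p.Prime := ⟨hp⟩
  haveI := charP_Laurent (p := p)
  rw [Qt, add_pow_char, add_pow_char, AddMonoidAlgebra.single_pow,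
    AddMonoidAlgebra.single_pow, AddMonoidAlgebra.single_pow, Qt,
    ZMod.pow_card, ZMod.pow_card, ZMod.pow_card]
  congr 2 <;> simp

/-- The exponent-multiplication ring hom. -/
noncomputable def phiP (p : ℕ) : LaurentPolynomial (ZMod p) →+* LaurentPolynomial (ZMod p) :=
  AddMonoidAlgebra.mapDomainRingHom (ZMod p) (AddMonoidHom.mulLeft (p : ℤ))

lemma phiP_single (n : ℤ) (r : ZMod p) :
    phiP p (AddMonoidAlgebra.single n r) = AddMonoidAlgebra.single ((p : ℤ) * n) r := by
  classical
  show AddMonoidAlgebra.mapDomain _ _ = _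
  rw [AddMonoidAlgebra.mapDomain_single]
  rfl

include hp in
lemma phiP_apply_zero (X : LaurentPolynomial (ZMod p)) : (phiP p X).coeff 0 = X.coeff 0 := by
  have hinj : Function.Injective (fun x : ℤ => (p : ℤ) * x) :=
    mul_right_injective₀ (by exact_mod_cast hp.ne_zero)
  have := Finsupp.mapDomain_apply hinj X.coeff 0
  simpa [phiP] using this

lemma phiP_support_dvd (X : LaurentPolynomial (ZMod p)) :
    ∀ x ∈ (phiP p X).coeff.support, (p : ℤ) ∣ x := by
  classical
  intro x hx
  have := Finsupp.mapDomain_support (f := fun y : ℤ => (p : ℤ) * y) (s := X.coeff)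
  have hx' : x ∈ (X.coeff.support.image fun y => (p : ℤ) * y) := this hx
  obtain ⟨y, _, rfl⟩ := Finset.mem_image.mp hx'
  exact Dvd.intro y rfl

lemma Qt_support (a b c : ZMod p) :
    (Qt a b c 1).coeff.support ⊆ Finset.Icc (-1 : ℤ) 1 := by
  classical
  rw [Qt, AddMonoidAlgebra.coeff_add, AddMonoidAlgebra.coeff_add, AddMonoidAlgebra.coeff_single, AddMonoidAlgebra.coeff_single, AddMonoidAlgebra.coeff_single]
  refine (Finsupp.support_add.trans ?_)
  intro x hx
  rcases Finset.mem_union.mp hx with hx | hx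
  · rcases Finset.mem_union.mp (Finsupp.support_add hx) with hx | hx
    · have := Finsupp.support_single_subset hx
      simp only [Finset.mem_singleton] at this
      subst this; decide
    · have := Finsupp.support_single_subset hx
      simp only [Finset.mem_singleton] at this
      subst this; decide
  · have := Finsupp.support_single_subset hx
    simp only [Finset.mem_singleton] at this
    subst this; decide

lemma Qt_pow_support (a b c : ZMod p) (r : ℕ) :
    (Qt a b c 1 ^ r).coeff.support ⊆ Finset.Icc (-(r : ℤ)) r := by
  classical
  induction r with
  | zero =>
      rw [pow_zero]
      intro x hx
      rw [AddMonoidAlgebra.one_def, AddMonoidAlgebra.coeff_single] at hx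
      have := Finsupp.support_single_subset hx
      simp only [Finset.mem_singleton] at this
      subst this
      simp only [Finset.mem_Icc]; omega
  | succ r ih =>
      rw [pow_succ]
      refine (AddMonoidAlgebra.support_coeff_mul_subset _ _).trans ?_
      intro x hx
      rw [Finset.mem_add] at hx
      obtain ⟨y, hy, z, hz, rfl⟩ := hx
      have hy' := ih hy
      have hz' := Qt_support a b c hz
      simp only [Finset.mem_Icc] at hy' hz' ⊢
      push_cast
      omega

/-- Decoupling: if `A`'s support is in `pℤ` and `B`'s support is in `(-p, p)`,
then the constant term of the product splits. -/
lemma ct_mul_decouple (A B : LaurentPolynomial (ZMod p))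
    (hA : ∀ x ∈ A.coeff.support, (p : ℤ) ∣ x)
    (hB : ∀ y ∈ B.coeff.support, |y| < (p : ℤ)) :
    (A * B).coeff 0 = A.coeff 0 * B.coeff 0 := by
  classical
  rw [AddMonoidAlgebra.coeff_mul]
  have hstep : ∀ a₁ ∈ A.coeff.support,
      (B.coeff.sum fun a₂ b₂ => if a₁ + a₂ = 0 then A.coeff a₁ * b₂ else 0)
        = if a₁ = 0 then A.coeff a₁ * B.coeff 0 else 0 := by
    intro a₁ ha₁
    rcases eq_or_ne a₁ 0 with rfl | h
    · simp only [if_true, zero_add]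
      rw [Finsupp.sum]
      by_cases h0 : (0:ℤ) ∈ B.coeff.support
      · rw [Finset.sum_eq_single 0]
        · simp
        · intro y hy hy0; simp [hy0]
        · intro hn; exact absurd h0 hn
      · rw [Finset.sum_eq_zero]
        · rw [Finsupp.notMem_support_iff.mp h0, mul_zero]
        · intro y hy
          have : y ≠ 0 := fun hy0 => h0 (hy0 ▸ hy)
          simp [this]
    · rw [Finsupp.sum, Finset.sum_eq_zero, if_neg h]
      intro y hy
      rw [if_neg]
      intro hxy
      have hyeq : y = -a₁ := by omega
      have hdvd : (p : ℤ) ∣ y := hyeq ▸ (hA a₁ ha₁).neg_right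
      have hlt : |y| < (p : ℤ) := hB y hy
      have : y = 0 := by
        rcases hdvd with ⟨k, rfl⟩
        have hp0 : (0:ℤ) < p := lt_of_le_of_lt (abs_nonneg _) hlt
        rcases eq_or_ne k 0 with rfl | hk
        · ring
        · exfalso
          have : (p:ℤ) ≤ |(p:ℤ) * k| := by
            rw [abs_mul, abs_of_pos hp0]
            nlinarith [Int.one_le_abs hk]
          omega
      omega
  rw [Finsupp.sum, Finset.sum_congr rfl fun a₁ h => hstep a₁ h]
  by_cases h0 : (0:ℤ) ∈ A.coeff.support
  · rw [Finset.sum_eq_single 0]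
    · simp
    · intro y hy hy0; simp [hy0]
    · intro hn; exact absurd h0 hn
  · rw [Finset.sum_eq_zero, Finsupp.notMem_support_iff.mp h0, zero_mul]
    intro x hx
    have : x ≠ 0 := fun hx0 => h0 (hx0 ▸ hx)
    simp [this]

include hp in
/-- The Lucas-type step: `ct(Q^(p*q+r)) = ct(Q^q) * ct(Q^r)` for `r < p`. -/
lemma ct_pow_step (a b c : ZMod p) (q r : ℕ) (hr : r < p) :
    (Qt a b c 1 ^ (p * q + r)).coeff 0 = (Qt a b c 1 ^ q).coeff 0 * (Qt a b c 1 ^ r).coeff 0 := by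
  have key : Qt a b c 1 ^ (p * q + r) = phiP p (Qt a b c 1 ^ q) * Qt a b c 1 ^ r := by
    rw [pow_add, pow_mul, Qt_pow_p hp, map_pow]
    congr 2
    rw [Qt, Qt, map_add, map_add, phiP_single, phiP_single, phiP_single,
      mul_neg_one, mul_zero, mul_one]
  rw [key, ct_mul_decouple (phiP p _) _ (phiP_support_dvd _)
      (fun y hy => ?_), phiP_apply_zero hp]
  have := Qt_pow_support a b c r hy
  simp only [Finset.mem_Icc] at this
  rw [abs_lt]
  omega

include hp in
lemma main_descent (a b c : ZMod p) :
    ∀ n : ℕ, (Qt a b c 1 ^ n).coeff 0 = 0 → ∃ m : ℕ, m < p ∧ (Qt a b c 1 ^ m).coeff 0 = 0 := by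
  haveI : Fact p.Prime := ⟨hp⟩
  intro n
  induction n using Nat.strong_induction_on with
  | _ n ih =>
    intro hn
    rcases lt_or_ge n p with h | h
    · exact ⟨n, h, hn⟩
    · have hdm : p * (n / p) + n % p = n := Nat.div_add_mod n p
      rw [← hdm, ct_pow_step hp a b c _ _ (Nat.mod_lt n hp.pos)] at hn
      rcases mul_eq_zero.mp hn with h0 | h0
      · have hq : n / p < n :=
          Nat.div_lt_self (lt_of_lt_of_le hp.pos h) hp.one_lt
        exact ih _ hq h0
      · exact ⟨n % p, Nat.mod_lt n hp.pos, h0⟩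

end ZModSide

theorem stmt_16 (am1 a0 a1 : ℤ) (p : ℕ) (hp : p.Prime) :
    (∃ n : ℕ, (p : ℤ) ∣ ct ((Ptri am1 a0 a1) ^ n)) ↔
      (∃ n : ℕ, n < p ∧ (p : ℤ) ∣ ct ((Ptri am1 a0 a1) ^ n)) := by
  have bridge : ∀ n : ℕ, (p : ℤ) ∣ ct ((Ptri am1 a0 a1) ^ n) ↔
      (Qt (am1 : ZMod p) (a0 : ZMod p) (a1 : ZMod p) 1 ^ n).coeff 0 = 0 := by
    intro n
    rw [← piR_Ptri, ← map_pow, piR_apply]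
    exact (ZMod.intCast_zmod_eq_zero_iff_dvd _ p).symm
  constructor
  · rintro ⟨n, hn⟩
    obtain ⟨m, hm, hm0⟩ := main_descent hp _ _ _ n ((bridge n).mp hn)
    exact ⟨m, hm, (bridge m).mpr hm0⟩
  · rintro ⟨n, _, hn⟩
    exact ⟨n, hn⟩
end

section
/- Let p be a prime, P(x) = a₋₁x⁻¹ + a₀ + a₁x with integer coefficients such that p ∤ ct[P(x)^n] for all n, and let a_n = ct[P(x)^n]. If m and m' are nonnegative integers such that for every digit d ∈ {0,…,p−1}, the number of base-p digits of m equal to d is congruent to the number of base-p digits of m' equal to d modulo p−1, then a_m ≡ a_{m'} (mod p). -/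
open LaurentPolynomial

namespace Stmt17Aux

/-- `T` as a monoid hom from `Multiplicative ℤ`. -/
noncomputable def Tmul (R : Type*) [Semiring R] : Multiplicative ℤ →* LaurentPolynomial R where
  toFun n := T (Multiplicative.toAdd n)
  map_one' := show (T (Multiplicative.toAdd (1 : Multiplicative ℤ)) : LaurentPolynomial R) = 1 by
    rw [toAdd_one]; exact T_zero
  map_mul' x y := show (T (Multiplicative.toAdd (x * y)) : LaurentPolynomial R) = _ by
    rw [toAdd_mul]; exact T_add _ _

/-- coefficient reduction hom. -/
noncomputable def phi (p : ℕ) : LaurentPolynomial ℤ →+* LaurentPolynomial (ZMod p) :=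
  AddMonoidAlgebra.liftNCRingHom
    ((LaurentPolynomial.C (R := ZMod p)).comp (Int.castRingHom (ZMod p)))
    (Tmul (ZMod p)) (fun _ _ => Commute.all _ _)

lemma phi_single (p : ℕ) (n : ℤ) (a : ℤ) :
    phi p (AddMonoidAlgebra.single n a) = AddMonoidAlgebra.single n ((a : ZMod p)) := by
  show AddMonoidAlgebra.liftNC _ _ _ = _
  rw [AddMonoidAlgebra.liftNC_single, single_eq_C_mul_T]
  rfl

lemma phi_C_mul_T (p : ℕ) (a : ℤ) (n : ℤ) :
    phi p (C a * T n) = C ((a : ZMod p)) * T n := by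
  rw [← single_eq_C_mul_T, ← single_eq_C_mul_T, phi_single]

lemma phi_apply (p : ℕ) (Q : LaurentPolynomial ℤ) (k : ℤ) :
    (phi p Q).coeff k = ((Q.coeff k : ℤ) : ZMod p) := by
  induction Q using AddMonoidAlgebra.induction_linear with
  | zero => simp
  | add f g hf hg =>
    rw [map_add, AddMonoidAlgebra.coeff_add, Finsupp.add_apply, hf, hg, AddMonoidAlgebra.coeff_add,
      Finsupp.add_apply]; push_cast; ring
  | single n a =>
    rw [phi_single, AddMonoidAlgebra.coeff_single, AddMonoidAlgebra.coeff_single,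
      Finsupp.single_apply, Finsupp.single_apply]
    split <;> simp

/-- exponent scaling by `p`. -/
noncomputable def sig (p : ℕ) : LaurentPolynomial (ZMod p) →+* LaurentPolynomial (ZMod p) :=
  AddMonoidAlgebra.mapDomainRingHom (ZMod p) (AddMonoidHom.mulLeft (p : ℤ))

lemma sig_single (p : ℕ) (n : ℤ) (a : ZMod p) :
    sig p (AddMonoidAlgebra.single n a) = AddMonoidAlgebra.single ((p : ℤ) * n) a := by
  show AddMonoidAlgebra.mapDomain _ _ = _
  rw [AddMonoidAlgebra.mapDomain_single]
  rfl

lemma sig_apply_zero (p : ℕ) (hp : 0 < p) (Q : LaurentPolynomial (ZMod p)) :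
    (sig p Q).coeff 0 = Q.coeff 0 := by
  have hinj : Function.Injective (fun n : ℤ => (p : ℤ) * n) := fun a b h =>
    mul_left_cancel₀ (by exact_mod_cast hp.ne') h
  have h2 : (sig p Q).coeff ((fun n : ℤ => (p : ℤ) * n) 0) = Q.coeff 0 :=
    Finsupp.mapDomain_apply hinj Q.coeff 0
  simpa using h2

lemma sig_support (p : ℕ) (Q : LaurentPolynomial (ZMod p)) :
    ∀ k ∈ (sig p Q).coeff.support, (p : ℤ) ∣ k := by
  intro k hk
  have := Finsupp.mapDomain_support (f := (AddMonoidHom.mulLeft (p : ℤ))) (s := Q.coeff) hk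
  simp only [Finset.mem_image] at this
  obtain ⟨j, -, hj⟩ := this
  exact ⟨j, hj.symm⟩

lemma C_inj (p : ℕ) : Function.Injective (C : ZMod p → LaurentPolynomial (ZMod p)) := by
  intro a b h
  have := congrArg (fun Q : LaurentPolynomial (ZMod p) => Q.coeff 0) h
  simpa using this

lemma laurent_charP (p : ℕ) : CharP (LaurentPolynomial (ZMod p)) p :=
  charP_of_injective_ringHom (C_inj p) p

lemma one_apply_zero (p : ℕ) : (1 : LaurentPolynomial (ZMod p)).coeff 0 = 1 := by
  rw [AddMonoidAlgebra.one_def, AddMonoidAlgebra.coeff_single, Finsupp.single_eq_same]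

lemma sig_C_mul_T (p : ℕ) (a : ZMod p) (n : ℤ) :
    sig p (C a * T n) = C a * T ((p : ℤ) * n) := by
  rw [← single_eq_C_mul_T, ← single_eq_C_mul_T, sig_single]

lemma pow_card_term (p : ℕ) [Fact p.Prime] (a : ZMod p) (n : ℤ) :
    (C a * T n) ^ p = C a * T ((p : ℤ) * n) := by
  rw [mul_pow, ← map_pow, ZMod.pow_card, T_pow]

lemma frob (p : ℕ) (hp : p.Prime) (b1 b2 b3 : ZMod p) :
    (C b1 * T (-1) + C b2 + C b3 * T 1) ^ p
      = sig p (C b1 * T (-1) + C b2 + C b3 * T 1) := by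
  haveI : Fact p.Prime := ⟨hp⟩
  haveI := laurent_charP p
  have h2 : (C b2 : LaurentPolynomial (ZMod p)) = C b2 * T 0 := by rw [T_zero, mul_one]
  rw [map_add, map_add, add_pow_char, add_pow_char, pow_card_term, pow_card_term, h2,
    pow_card_term, sig_C_mul_T, sig_C_mul_T, sig_C_mul_T]

lemma support_trinomial (p : ℕ) (b1 b2 b3 : ZMod p) :
    ∀ k ∈ (C b1 * T (-1) + C b2 + C b3 * T 1).coeff.support, k.natAbs ≤ 1 := by
  intro k hk
  have h1 := Finsupp.support_add (g₁ := (C b1 * T (-1) + C b2).coeff) (g₂ := (C b3 * T 1).coeff) (by rwa [AddMonoidAlgebra.coeff_add] at hk)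
  rw [Finset.mem_union] at h1
  rcases h1 with h1 | h1
  · have h2 := Finsupp.support_add (g₁ := (C b1 * T (-1)).coeff) (g₂ := (C b2).coeff) (by rwa [AddMonoidAlgebra.coeff_add] at h1)
    rw [Finset.mem_union] at h2
    rcases h2 with h2 | h2
    · have := support_C_mul_T b1 (-1) h2
      simp at this; simp [this]
    · have h3 : (C b2 : LaurentPolynomial (ZMod p)) = C b2 * T 0 := by rw [T_zero, mul_one]
      rw [h3] at h2
      have := support_C_mul_T b2 0 h2
      simp at this; simp [this]
  · have := support_C_mul_T b3 1 h1
    simp at this; simp [this]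

lemma support_pow (p : ℕ) (b1 b2 b3 : ZMod p) (r : ℕ) :
    ∀ k ∈ ((C b1 * T (-1) + C b2 + C b3 * T 1) ^ r).coeff.support, k.natAbs ≤ r := by
  induction r with
  | zero =>
    intro k hk
    rw [pow_zero] at hk
    have : (1 : LaurentPolynomial (ZMod p)) = C 1 := by simp
    rw [this] at hk
    have h3 : (C (1 : ZMod p) : LaurentPolynomial (ZMod p)) = C 1 * T 0 := by rw [T_zero, mul_one]
    rw [h3] at hk
    have := support_C_mul_T (1 : ZMod p) 0 hk
    simp at this; simp [this]
  | succ r ih =>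
    intro k hk
    rw [pow_succ] at hk
    have := AddMonoidAlgebra.support_coeff_mul_subset _ _ hk
    rw [Finset.mem_add] at this
    obtain ⟨y, hy, z, hz, rfl⟩ := this
    have h1 := ih y hy
    have h2 := support_trinomial p b1 b2 b3 z hz
    calc (y + z).natAbs ≤ y.natAbs + z.natAbs := Int.natAbs_add_le y z
      _ ≤ r + 1 := Nat.add_le_add h1 h2

lemma mul_apply_zero_split (p : ℕ) (Q R : LaurentPolynomial (ZMod p))
    (hQ : ∀ k ∈ Q.coeff.support, (p : ℤ) ∣ k) (hR : ∀ k ∈ R.coeff.support, k.natAbs < p) :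
    (Q * R).coeff 0 = Q.coeff 0 * R.coeff 0 := by
  classical
  rw [AddMonoidAlgebra.coeff_mul]
  rw [Finsupp.sum]
  have hinner : ∀ a₁ ∈ Q.coeff.support,
      (R.coeff.sum fun a₂ b₂ => if a₁ + a₂ = 0 then Q.coeff a₁ * b₂ else 0)
        = if a₁ = 0 then Q.coeff 0 * R.coeff 0 else 0 := by
    intro a₁ ha₁
    rw [Finsupp.sum]
    rcases eq_or_ne a₁ 0 with rfl | hne
    · simp only [if_true]
      have : ∀ a₂ ∈ R.coeff.support, (if (0 : ℤ) + a₂ = 0 then Q.coeff 0 * R.coeff a₂ else 0)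
          = if a₂ = 0 then Q.coeff 0 * R.coeff a₂ else 0 := by
        intro a₂ _; simp
      rw [Finset.sum_congr rfl this, Finset.sum_ite_eq' R.coeff.support 0 (fun a₂ => Q.coeff 0 * R.coeff a₂)]
      split
      · rfl
      · rename_i h0
        rw [Finsupp.notMem_support_iff.mp h0, mul_zero]
    · rw [if_neg hne]
      apply Finset.sum_eq_zero
      intro a₂ ha₂
      rw [if_neg]
      intro hsum
      have ha₂0 : a₂ = -a₁ := by omega
      have hdvd : (p : ℤ) ∣ a₂ := ha₂0 ▸ (hQ a₁ ha₁).neg_right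
      have hlt := hR a₂ ha₂
      have ha₂ne : a₂ ≠ 0 := by
        intro h0; apply hne; omega
      have hle := Nat.le_of_dvd (Int.natAbs_pos.mpr ha₂ne) (Int.natAbs_dvd_natAbs.mpr hdvd)
      simp only [Int.natAbs_natCast] at hle
      omega
  rw [Finset.sum_congr rfl hinner, Finset.sum_ite_eq' Q.coeff.support 0 (fun _ => Q.coeff 0 * R.coeff 0)]
  split
  · rfl
  · rename_i h0
    rw [Finsupp.notMem_support_iff.mp h0, zero_mul]

lemma key_rec (p : ℕ) (hp : p.Prime) (b1 b2 b3 : ZMod p) (n : ℕ) :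
    (((C b1 * T (-1) + C b2 + C b3 * T 1 : LaurentPolynomial (ZMod p))) ^ n).coeff 0
      = (((C b1 * T (-1) + C b2 + C b3 * T 1 : LaurentPolynomial (ZMod p))) ^ (n / p)).coeff 0
        * (((C b1 * T (-1) + C b2 + C b3 * T 1 : LaurentPolynomial (ZMod p))) ^ (n % p)).coeff 0 := by
  set Q : LaurentPolynomial (ZMod p) := C b1 * T (-1) + C b2 + C b3 * T 1 with hQdef
  have hsplit : Q ^ n = sig p (Q ^ (n / p)) * Q ^ (n % p) := by
    conv_lhs => rw [← Nat.div_add_mod n p]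
    rw [pow_add, pow_mul, frob p hp, ← map_pow]
  rw [hsplit, mul_apply_zero_split p _ _ (sig_support p _)
    (fun k hk => lt_of_le_of_lt (support_pow p b1 b2 b3 (n % p) k hk)
      (Nat.mod_lt n hp.pos)), sig_apply_zero p hp.pos]

lemma digit_prod (p : ℕ) (hp : p.Prime) (b1 b2 b3 : ZMod p) (n : ℕ) :
    (((C b1 * T (-1) + C b2 + C b3 * T 1 : LaurentPolynomial (ZMod p))) ^ n).coeff 0
      = ((Nat.digits p n).map
          (fun d => (((C b1 * T (-1) + C b2 + C b3 * T 1 : LaurentPolynomial (ZMod p))) ^ d).coeff 0)).prod := by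
  induction n using Nat.strong_induction_on with
  | _ n ih =>
    rcases Nat.eq_zero_or_pos n with rfl | hn
    · simp [one_apply_zero]
    · rw [Nat.digits_def' hp.one_lt hn, List.map_cons, List.prod_cons,
        key_rec p hp, ← ih (n / p) (Nat.div_lt_self hn hp.one_lt)]
      ring

end Stmt17Aux

open Stmt17Aux

theorem stmt_17 (am1 a0 a1 : ℤ) (p : ℕ) (hp : p.Prime)
    (hndvd : ∀ n : ℕ, ¬ (p : ℤ) ∣ ct ((Ptri am1 a0 a1) ^ n)) (m m' : ℕ)
    (hcount : ∀ d : ℕ, d < p →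
      (Nat.digits p m).count d ≡ (Nat.digits p m').count d [MOD p - 1]) :
    ct ((Ptri am1 a0 a1) ^ m) ≡ ct ((Ptri am1 a0 a1) ^ m') [ZMOD (p : ℤ)] := by
  classical
  haveI : Fact p.Prime := ⟨hp⟩
  set Qz : LaurentPolynomial (ZMod p) :=
    C ((am1 : ZMod p)) * T (-1) + C ((a0 : ZMod p)) + C ((a1 : ZMod p)) * T 1 with hQz
  have phi_C : ∀ a : ℤ, phi p (C a) = C ((a : ZMod p)) := by
    intro a
    have h1 : (C a : LaurentPolynomial ℤ) = C a * T 0 := by rw [T_zero, mul_one]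
    have h2 : (C ((a : ZMod p)) : LaurentPolynomial (ZMod p)) = C ((a : ZMod p)) * T 0 := by
      rw [T_zero, mul_one]
    rw [h1, phi_C_mul_T, ← h2]
  have hPtri : phi p (Ptri am1 a0 a1) = Qz := by
    rw [Ptri, map_add, map_add, phi_C_mul_T, phi_C_mul_T, phi_C]
  have hconn : ∀ n : ℕ, (Qz ^ n).coeff 0 = ((ct (Ptri am1 a0 a1 ^ n) : ℤ) : ZMod p) := by
    intro n
    rw [← hPtri, ← map_pow, phi_apply]
    rfl
  have hne : ∀ d : ℕ, (Qz ^ d).coeff 0 ≠ 0 := by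
    intro d h
    apply hndvd d
    rwa [hconn, ZMod.intCast_zmod_eq_zero_iff_dvd] at h
  have hmain : (Qz ^ m).coeff 0 = (Qz ^ m').coeff 0 := by
    have hsub : ∀ k : ℕ, (Nat.digits p k).toFinset ⊆ Finset.range p := fun k d hd =>
      Finset.mem_range.mpr (Nat.digits_lt_base hp.one_lt (List.mem_toFinset.mp hd))
    have hout : ∀ (k : ℕ) (x : ℕ), x ∈ Finset.range p → x ∉ (Nat.digits p k).toFinset →
        (Qz ^ x).coeff 0 ^ (Nat.digits p k).count x = 1 := by
      intro k x _ hx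
      rw [List.count_eq_zero_of_not_mem (fun h => hx (List.mem_toFinset.mpr h)), pow_zero]
    rw [hQz, digit_prod p hp, digit_prod p hp, ← hQz, Finset.prod_list_map_count,
      Finset.prod_list_map_count, Finset.prod_subset (hsub m) (hout m),
      Finset.prod_subset (hsub m') (hout m')]
    apply Finset.prod_congr rfl
    intro d hd
    have hdlt : d < p := Finset.mem_range.mp hd
    have hu : IsUnit ((Qz ^ d).coeff 0) := IsUnit.mk0 _ (hne d)
    have horder : orderOf hu.unit ∣ p - 1 :=
      orderOf_dvd_of_pow_eq_one (ZMod.units_pow_card_sub_one_eq_one p hu.unit)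
    have hmod : (Nat.digits p m).count d ≡ (Nat.digits p m').count d [MOD orderOf hu.unit] :=
      (hcount d hdlt).of_dvd horder
    have hupow : hu.unit ^ (Nat.digits p m).count d = hu.unit ^ (Nat.digits p m').count d :=
      pow_eq_pow_iff_modEq.mpr hmod
    calc (Qz ^ d).coeff 0 ^ (Nat.digits p m).count d
        = ((hu.unit ^ (Nat.digits p m).count d : (ZMod p)ˣ) : ZMod p) := by
          rw [Units.val_pow_eq_pow_val, hu.unit_spec]
      _ = ((hu.unit ^ (Nat.digits p m').count d : (ZMod p)ˣ) : ZMod p) := by rw [hupow]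
      _ = (Qz ^ d).coeff 0 ^ (Nat.digits p m').count d := by
          rw [Units.val_pow_eq_pow_val, hu.unit_spec]
  rw [hconn, hconn] at hmain
  exact (ZMod.intCast_eq_intCast_iff _ _ _).mp hmain
end

section
/- Let P(x) = a₁x⁻¹ + a₀ + a₁x be a symmetric integer Laurent trinomial, p > 2 a prime with p ∤ a₁, and Q(x) any integer Laurent polynomial. Then there exist an integer h ≥ 0 and integers c_0, …, c_h such that ct[P(x)^n Q(x)] ≡ Σ_{i=0}^{h} c_i · ct[P(x)^{n+i}] (mod p) for all n ≥ 0. -/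
open LaurentPolynomial

section Aux

/-- The constant term of a Laurent polynomial over any ring. -/
noncomputable def ctF {K : Type*} [CommRing K] (A : LaurentPolynomial K) : K := A.coeff 0

variable {K : Type*} [Field K]

lemma ctF_add {K : Type*} [CommRing K] (A B : LaurentPolynomial K) :
    ctF (A + B) = ctF A + ctF B := Finsupp.add_apply A.coeff B.coeff 0

lemma ctF_sub {K : Type*} [CommRing K] (A B : LaurentPolynomial K) :
    ctF (A - B) = ctF A - ctF B := Finsupp.sub_apply A.coeff B.coeff 0

lemma ctF_smul {K : Type*} [CommRing K] (r : K) (A : LaurentPolynomial K) :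
    ctF (r • A) = r * ctF A := Finsupp.smul_apply r A.coeff 0

lemma ctF_zero {K : Type*} [CommRing K] : ctF (0 : LaurentPolynomial K) = 0 := rfl

lemma ctF_single {K : Type*} [CommRing K] (n : ℤ) (r : K) :
    ctF (AddMonoidAlgebra.single n r : LaurentPolynomial K) = if n = 0 then r else 0 :=
  Finsupp.single_apply

lemma ctF_invert {K : Type*} [CommRing K] (A : LaurentPolynomial K) :
    ctF (invert A) = ctF A := by
  show (invert A).coeff 0 = A.coeff 0
  rw [invert_apply, neg_zero]

lemma ctF_sum {K : Type*} [CommRing K] {ι : Type*} (s : Finset ι)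
    (f : ι → LaurentPolynomial K) : ctF (∑ i ∈ s, f i) = ∑ i ∈ s, ctF (f i) :=
  by simp only [ctF, AddMonoidAlgebra.coeff_sum, Finsupp.finset_sum_apply]

/-- The monoid hom sending `n` to `T n`. -/
noncomputable def TMhom (K : Type*) [CommRing K] : Multiplicative ℤ →* LaurentPolynomial K where
  toFun n := T n.toAdd
  map_one' := T_zero
  map_mul' x y := T_add x.toAdd y.toAdd

/-- Reduction map on Laurent polynomials. -/
noncomputable def redMap (K : Type*) [CommRing K] :
    LaurentPolynomial ℤ →ₐ[ℤ] LaurentPolynomial K :=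
  AddMonoidAlgebra.lift ℤ _ ℤ (TMhom K)

lemma redMap_single (K : Type*) [CommRing K] (n : ℤ) (r : ℤ) :
    redMap K (AddMonoidAlgebra.single n r) = C (r : K) * T n := by
  rw [redMap, AddMonoidAlgebra.lift_single]
  show r • (T n : LaurentPolynomial K) = _
  rw [← Int.cast_smul_eq_zsmul K, Algebra.smul_def, ← C_eq_algebraMap]

lemma redMap_ct (K : Type*) [CommRing K] (A : LaurentPolynomial ℤ) :
    ctF (redMap K A) = ((ct A : ℤ) : K) := by
  induction A using AddMonoidAlgebra.induction_linear with
  | zero => simp [ctF_zero, ct]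
  | add f g hf hg =>
      rw [map_add, ctF_add, hf, hg]
      show ((f.coeff 0 : ℤ) : K) + ((g.coeff 0 : ℤ) : K) = (((f + g).coeff 0 : ℤ) : K)
      rw [AddMonoidAlgebra.coeff_add, Finsupp.add_apply]
      push_cast
      ring
  | single n r =>
      rw [redMap_single, ← single_eq_C_mul_T, ctF_single]
      show _ = ((AddMonoidAlgebra.single n r : LaurentPolynomial ℤ).coeff 0 : K)
      rw [AddMonoidAlgebra.coeff_single, Finsupp.single_apply]
      split <;> simp

/-- The key lemma over a field. -/
theorem key_field (htwo : (2 : K) ≠ 0) (b a0 : K) (hb : b ≠ 0) (Q : LaurentPolynomial K) :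
    ∃ (h : ℕ) (c : ℕ → K), ∀ n : ℕ,
      ctF ((C b * T (-1) + C a0 + C b * T 1) ^ n * Q) =
        ∑ i ∈ Finset.range (h + 1),
          c i * ctF ((C b * T (-1) + C a0 + C b * T 1) ^ (n + i)) := by
  set P : LaurentPolynomial K := C b * T (-1) + C a0 + C b * T 1 with hPdef
  -- the involution fixes P
  have hinvP : invert P = P := by
    rw [hPdef]
    simp only [map_add, map_mul, invert_C, invert_T, neg_neg]
    ring
  -- symmetry of constant terms
  have hsym : ∀ (k : ℕ) (j : ℤ), ctF (P ^ k * T j) = ctF (P ^ k * T (-j)) := by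
    intro k j
    have h1 : invert (P ^ k * T j) = P ^ k * T (-j) := by
      rw [map_mul, map_pow, hinvP, invert_T]
    rw [← ctF_invert (P ^ k * T j), h1]
  -- Chebyshev-type membership
  have cheb : ∀ j : ℕ, (T (j : ℤ) + T (-(j : ℤ)) : LaurentPolynomial K) ∈
      Algebra.adjoin K {P} := by
    intro j
    induction j using Nat.twoStepInduction with
    | zero =>
        push_cast
        rw [neg_zero, T_zero]
        exact add_mem (one_mem _) (one_mem _)
    | one =>
        have hmem : C b⁻¹ * (P - C a0) ∈ Algebra.adjoin K {P} := by
          refine mul_mem ?_ (sub_mem (Algebra.self_mem_adjoin_singleton K P) ?_)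
          · rw [C_eq_algebraMap]; exact Subalgebra.algebraMap_mem _ _
          · rw [C_eq_algebraMap]; exact Subalgebra.algebraMap_mem _ _
        have heq : C b⁻¹ * (P - C a0) = T ((1 : ℕ) : ℤ) + T (-((1 : ℕ) : ℤ)) := by
          have h0 : P - C a0 = C b * (T (-1) + T 1) := by rw [hPdef]; ring
          rw [h0, ← mul_assoc, ← map_mul, inv_mul_cancel₀ hb, map_one, one_mul]
          push_cast
          ring
        rwa [heq] at hmem
    | more j ihj ihj1 =>
        have hPmem : (T (1:ℤ) + T (-1:ℤ) : LaurentPolynomial K) ∈ Algebra.adjoin K {P} := by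
          have hmem : C b⁻¹ * (P - C a0) ∈ Algebra.adjoin K {P} := by
            refine mul_mem ?_ (sub_mem (Algebra.self_mem_adjoin_singleton K P) ?_)
            · rw [C_eq_algebraMap]; exact Subalgebra.algebraMap_mem _ _
            · rw [C_eq_algebraMap]; exact Subalgebra.algebraMap_mem _ _
          have heq : C b⁻¹ * (P - C a0) = T (1:ℤ) + T (-1:ℤ) := by
            have h0 : P - C a0 = C b * (T (-1) + T 1) := by rw [hPdef]; ring
            rw [h0, ← mul_assoc, ← map_mul, inv_mul_cancel₀ hb, map_one, one_mul]
            ring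
          rwa [heq] at hmem
        have hprod : (T (1:ℤ) + T (-1:ℤ)) * (T ((j+1 : ℕ) : ℤ) + T (-((j+1 : ℕ) : ℤ)))
            = (T ((j+2 : ℕ) : ℤ) + T (-((j+2 : ℕ) : ℤ)))
              + (T ((j : ℕ) : ℤ) + T (-((j : ℕ) : ℤ)) : LaurentPolynomial K) := by
          push_cast
          rw [add_mul, mul_add, mul_add, ← T_add, ← T_add, ← T_add, ← T_add]
          ring_nf
        have hmem2 := sub_mem (mul_mem hPmem ihj1) ihj
        have heq2 : (T (1:ℤ) + T (-1:ℤ)) * (T ((j+1 : ℕ) : ℤ) + T (-((j+1 : ℕ) : ℤ)))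
            - (T ((j : ℕ) : ℤ) + T (-((j : ℕ) : ℤ)) : LaurentPolynomial K)
            = T ((j+2 : ℕ) : ℤ) + T (-((j+2 : ℕ) : ℤ)) := by
          rw [hprod]; ring
        rwa [heq2] at hmem2
  -- the submodule of Laurent polynomials with all relevant constant terms zero
  let W : Submodule K (LaurentPolynomial K) :=
    { carrier := {A | ∀ n : ℕ, ctF (P ^ n * A) = 0}
      add_mem' := by
        intro x y hx hy n
        rw [mul_add, ctF_add, hx n, hy n, add_zero]
      zero_mem' := by intro n; rw [mul_zero, ctF_zero]
      smul_mem' := by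
        intro c x hx n
        rw [mul_smul_comm, ctF_smul, hx n, mul_zero] }
  -- everything is in the sup
  have htop : ∀ q : LaurentPolynomial K,
      q ∈ (Subalgebra.toSubmodule (Algebra.adjoin K {P})) ⊔ W := by
    intro q
    induction q using AddMonoidAlgebra.induction_linear with
    | zero => exact zero_mem _
    | add f g hf hg => exact add_mem hf hg
    | single n r =>
        have hT : (T n : LaurentPolynomial K) ∈
            (Subalgebra.toSubmodule (Algebra.adjoin K {P})) ⊔ W := by
          have h1 : (T n + T (-n) : LaurentPolynomial K) ∈ Algebra.adjoin K {P} := by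
            rcases Int.natAbs_eq n with h | h
            · rw [h]; exact cheb n.natAbs
            · rw [h]
              have h2 := cheb n.natAbs
              rw [neg_neg]
              rwa [add_comm] at h2
          have h2 : (T n - T (-n) : LaurentPolynomial K) ∈ W := by
            intro k
            rw [mul_sub, ctF_sub, hsym k n, sub_self]
          have e1 : (T n + T (-n)) + (T n - T (-n)) = (2:K) • (T n : LaurentPolynomial K) := by
            rw [two_smul]; abel
          have hdec : (T n : LaurentPolynomial K)
              = (2⁻¹:K) • ((T n + T (-n)) + (T n - T (-n))) := by
            rw [e1, smul_smul, inv_mul_cancel₀ htwo, one_smul]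
          rw [hdec]
          exact Submodule.smul_mem _ _ (add_mem
            (Submodule.mem_sup_left ((Subalgebra.mem_toSubmodule _).2 h1))
            (Submodule.mem_sup_right h2))
        have hs : (AddMonoidAlgebra.single n r : LaurentPolynomial K) = r • (T n) := by
          rw [single_eq_C_mul_T, C_eq_algebraMap, ← Algebra.smul_def]
        rw [hs]
        exact Submodule.smul_mem _ _ hT
  obtain ⟨S, hS, A', hA', rfl⟩ := Submodule.mem_sup.1 (htop Q)
  rw [Subalgebra.mem_toSubmodule, Algebra.adjoin_singleton_eq_range_aeval, AlgHom.mem_range]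
    at hS
  obtain ⟨f, rfl⟩ := hS
  refine ⟨f.natDegree, fun i => f.coeff i, fun n => ?_⟩
  have hexp : P ^ n * (Polynomial.aeval P f)
      = ∑ i ∈ Finset.range (f.natDegree + 1), f.coeff i • P ^ (n + i) := by
    rw [Polynomial.aeval_eq_sum_range, Finset.mul_sum]
    refine Finset.sum_congr rfl fun i _ => ?_
    rw [mul_smul_comm, pow_add]
  rw [mul_add, ctF_add, hA' n, add_zero, hexp, ctF_sum]
  refine Finset.sum_congr rfl fun i _ => ?_
  rw [ctF_smul]

end Aux

theorem stmt_19 (a1 a0 : ℤ) (p : ℕ) (hp : p.Prime) (hp2 : 2 < p) (ha1 : ¬ (p : ℤ) ∣ a1)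
    (Q : LaurentPolynomial ℤ) :
    ∃ (h : ℕ) (c : ℕ → ℤ), ∀ n : ℕ,
      ct ((C a1 * T (-1) + C a0 + C a1 * T 1) ^ n * Q) ≡
        ∑ i ∈ Finset.range (h + 1),
          c i * ct ((C a1 * T (-1) + C a0 + C a1 * T 1) ^ (n + i)) [ZMOD (p : ℤ)] := by
  haveI : Fact p.Prime := ⟨hp⟩
  set K := ZMod p with hK
  have htwo : (2 : K) ≠ 0 := by
    intro h
    have h2 : (p : ℤ) ∣ 2 := (ZMod.intCast_zmod_eq_zero_iff_dvd 2 p).1 (by exact_mod_cast h)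
    have hle : (p : ℤ) ≤ 2 := Int.le_of_dvd (by norm_num) h2
    omega
  have hb : ((a1 : K)) ≠ 0 := fun h => ha1 ((ZMod.intCast_zmod_eq_zero_iff_dvd a1 p).1 h)
  set Pint : LaurentPolynomial ℤ := C a1 * T (-1) + C a0 + C a1 * T 1 with hPint
  set PK : LaurentPolynomial K := C (a1 : K) * T (-1) + C ((a0 : ℤ) : K) + C (a1 : K) * T 1
    with hPK
  have hred : redMap K Pint = PK := by
    rw [hPint, hPK]
    have h1 : (C a1 * T (-1) : LaurentPolynomial ℤ) = AddMonoidAlgebra.single (-1) a1 :=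
      (single_eq_C_mul_T a1 (-1)).symm
    have h2 : (C a0 : LaurentPolynomial ℤ) = AddMonoidAlgebra.single 0 a0 := by
      rw [← mul_one (C a0), ← T_zero, single_eq_C_mul_T]
    have h3 : (C a1 * T 1 : LaurentPolynomial ℤ) = AddMonoidAlgebra.single 1 a1 :=
      (single_eq_C_mul_T a1 1).symm
    rw [h1, h2, h3, map_add, map_add, redMap_single, redMap_single, redMap_single, T_zero,
      mul_one]
  obtain ⟨h, c, hc⟩ := key_field (K := K) htwo (a1 : K) ((a0 : ℤ) : K) hb (redMap K Q)
  refine ⟨h, fun i => ((c i).val : ℤ), fun n => ?_⟩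
  rw [← ZMod.intCast_eq_intCast_iff]
  push_cast
  have lhs : ((ct (Pint ^ n * Q) : ℤ) : K) = ctF (PK ^ n * redMap K Q) := by
    rw [← redMap_ct, map_mul, map_pow, hred]
  have rhs : ∀ i, ((ct (Pint ^ (n + i)) : ℤ) : K) = ctF (PK ^ (n + i)) := by
    intro i
    rw [← redMap_ct, map_pow, hred]
  rw [lhs, hc n]
  refine Finset.sum_congr rfl fun i _ => ?_
  rw [← rhs i]
  congr 1
  rw [ZMod.natCast_val, ZMod.cast_id]
end
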